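/- arXiv:1209.5933 — 4 statements merged into one kernel-verified Lean document; each statement's English description precedes it below -/
import Mathlib

section
/- Let A be a von Neumann algebra (or unital C*-algebra), H a complex Hilbert space, and Φ, Ψ : A → L(H) completely positive maps with Ψ ≤ Φ (i.e. Φ − Ψ is completely positive). If (M, π, J) is a minimal Stinespring dilation of Φ, then there exists a unique operator E ∈ L(M) such that [E, π(a)] = 0 for all a ∈ A and Ψ(a) = J*π(a)EJ for all a ∈ A. -/
open scoped ComplexOrder ComplexInnerProductSpace Topology

noncomputable section

/-- A linear map `Φ : A → L(H)` from a `*`-algebra into the bounded operators on a complex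
Hilbert space `H` is *completely positive* if for all `n`, `a₁, …, aₙ ∈ A` and
`φ₁, …, φₙ ∈ H` one has `∑ j k, ⟪φ j, Φ (star (a j) * a k) (φ k)⟫ ≥ 0`. -/
def IsCompletelyPositive {A : Type*} [NonUnitalNonAssocSemiring A] [StarRing A] [Module ℂ A]
    {H : Type*} [NormedAddCommGroup H] [InnerProductSpace ℂ H]
    (Φ : A →ₗ[ℂ] H →L[ℂ] H) : Prop :=
  ∀ (n : ℕ) (a : Fin n → A) (v : Fin n → H),
    0 ≤ ∑ j, ∑ k, ⟪v j, Φ (star (a j) * a k) (v k)⟫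

/-- The convex set `CP_P(A;H)` of completely positive maps `Φ : A → L(H)` with `Φ 1 = P`. -/
def CPWithUnit (A : Type*) [Ring A] [StarRing A] [Algebra ℂ A]
    (H : Type*) [NormedAddCommGroup H] [InnerProductSpace ℂ H]
    (P : H →L[ℂ] H) : Set (A →ₗ[ℂ] H →L[ℂ] H) :=
  {Φ | IsCompletelyPositive Φ ∧ Φ 1 = P}

/-- `x` is an extremal point of the convex set `S`: whenever `x` is a nontrivial convex
combination of two members of `S`, they coincide. -/
def IsExtremalIn {V : Type*} [AddCommMonoid V] [Module ℂ V] (S : Set V) (x : V) : Prop :=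
  x ∈ S ∧ ∀ y ∈ S, ∀ z ∈ S, ∀ t : ℝ, 0 < t → t < 1 →
    x = (t : ℂ) • y + ((1 - t : ℝ) : ℂ) • z → y = z

/-- `(M, π, J)` is a *minimal Stinespring dilation* of `Φ : A → L(H)`: `π` is a unital
`*`-representation of `A` on `M`, `J : H → M` is bounded linear, `Φ a = J⋆ ∘ π a ∘ J`, and
the span of `{π a (J v)}` is dense in `M`. -/
structure IsMinimalStinespring {A : Type*} [Ring A] [StarRing A] [Algebra ℂ A]
    {H M : Type*} [NormedAddCommGroup H] [InnerProductSpace ℂ H] [CompleteSpace H]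
    [NormedAddCommGroup M] [InnerProductSpace ℂ M] [CompleteSpace M]
    (Φ : A →ₗ[ℂ] H →L[ℂ] H) (π : A →⋆ₐ[ℂ] (M →L[ℂ] M)) (J : H →L[ℂ] M) : Prop where
  dilation : ∀ a : A, Φ a = (ContinuousLinearMap.adjoint J) ∘L π a ∘L J
  minimal : Dense (↑(Submodule.span ℂ {m : M | ∃ (a : A) (v : H), m = π a (J v)}) : Set M)

set_option linter.unusedSectionVars false
namespace CPRN

open TensorProduct ContinuousLinearMap

variable {A : Type*} [CStarAlgebra A]
  {H M : Type*} [NormedAddCommGroup H] [InnerProductSpace ℂ H] [CompleteSpace H]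
  [NormedAddCommGroup M] [InnerProductSpace ℂ M] [CompleteSpace M]

variable (π : A →⋆ₐ[ℂ] (M →L[ℂ] M)) (J : H →L[ℂ] M) (Ψ : A →ₗ[ℂ] H →L[ℂ] H)

def pM : A ⊗[ℂ] H →ₗ[ℂ] M :=
  TensorProduct.lift <| LinearMap.mk₂ ℂ (fun a v => π a (J v))
    (fun a b v => by simp [map_add])
    (fun c a v => by simp)
    (fun a v w => by simp)
    (fun c a v => by simp)

@[simp] lemma pM_tmul (a : A) (v : H) : pM π J (a ⊗ₜ[ℂ] v) = π a (J v) := rfl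

def psiM (b : A) : A ⊗[ℂ] H →ₗ[ℂ] H :=
  TensorProduct.lift <| LinearMap.mk₂ ℂ (fun a v => Ψ (star b * a) v)
    (fun a a' v => by simp [mul_add, map_add])
    (fun c a v => by simp [mul_smul_comm])
    (fun a v w => by simp)
    (fun c a v => by simp)

@[simp] lemma psiM_tmul (b a : A) (v : H) :
    psiM Ψ b (a ⊗ₜ[ℂ] v) = Ψ (star b * a) v := rfl

lemma psiM_add_left (b b' : A) : psiM Ψ (b + b') = psiM Ψ b + psiM Ψ b' := by
  apply TensorProduct.ext'
  intro a v
  simp [star_add, add_mul, map_add]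

lemma psiM_smul_left (c : ℂ) (b : A) :
    psiM Ψ (c • b) = (starRingEnd ℂ c) • psiM Ψ b := by
  apply TensorProduct.ext'
  intro a v
  simp [star_smul, smul_mul_assoc, map_smul]

def gM (t : A ⊗[ℂ] H) : A ⊗[ℂ] H →ₗ[ℂ] ℂ :=
  TensorProduct.lift <| LinearMap.mk₂ ℂ (fun b w => ⟪psiM Ψ b t, w⟫)
    (fun b b' w => by simp [psiM_add_left, inner_add_left])
    (fun c b w => by simp [psiM_smul_left, inner_smul_left, mul_comm])
    (fun b v w => by simp [inner_add_right])
    (fun c b w => by simp [inner_smul_right])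

@[simp] lemma gM_tmul (t : A ⊗[ℂ] H) (b : A) (w : H) :
    gM Ψ t (b ⊗ₜ[ℂ] w) = ⟪psiM Ψ b t, w⟫ := rfl

@[simp] lemma gM_zero_left : gM Ψ 0 = 0 := by
  apply TensorProduct.ext'
  intro b w
  simp

lemma gM_add_left (t t' : A ⊗[ℂ] H) : gM Ψ (t + t') = gM Ψ t + gM Ψ t' := by
  apply TensorProduct.ext'
  intro b w
  simp [map_add, inner_add_left]

lemma gM_smul_left (c : ℂ) (t : A ⊗[ℂ] H) :
    gM Ψ (c • t) = (starRingEnd ℂ c) • gM Ψ t := by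
  apply TensorProduct.ext'
  intro b w
  simp [map_smul, inner_smul_left, mul_comm]


variable {Ψ} in
lemma cp_pos1 (hΨ : IsCompletelyPositive Ψ) (a : A) (v : H) : 0 ≤ ⟪v, Ψ (star a * a) v⟫ := by
  have h := hΨ 1 ![a] ![v]
  simpa using h

variable {Ψ} in
lemma cp_herm (hΨ : IsCompletelyPositive Ψ) (x : A) (φ ψ : H) :
    ⟪ψ, Ψ (star x) φ⟫ = starRingEnd ℂ ⟪φ, Ψ x ψ⟫ := by
  have key : ∀ φ' : H, (⟪φ', Ψ x ψ⟫ + ⟪ψ, Ψ (star x) φ'⟫).im = 0 := by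
    intro φ'
    have h2 := hΨ 2 ![1, x] ![φ', ψ]
    have e2 : (∑ j : Fin 2, ∑ k : Fin 2,
        ⟪(![φ', ψ]) j, Ψ (star ((![1, x]) j) * (![1, x]) k) ((![φ', ψ]) k)⟫)
        = ⟪φ', Ψ 1 φ'⟫ + ⟪φ', Ψ x ψ⟫ + ⟪ψ, Ψ (star x) φ'⟫ + ⟪ψ, Ψ (star x * x) ψ⟫ := by
      simp [Fin.sum_univ_two]
      ring
    rw [e2] at h2
    have hA : 0 ≤ ⟪φ', Ψ 1 φ'⟫ := by simpa using cp_pos1 hΨ 1 φ'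
    have hD : 0 ≤ ⟪ψ, Ψ (star x * x) ψ⟫ := cp_pos1 hΨ x ψ
    have hA' := (Complex.le_def.mp hA).2
    have hD' := (Complex.le_def.mp hD).2
    have h2' := (Complex.le_def.mp h2).2
    simp only [Complex.add_im, Complex.zero_im] at hA' hD' h2' ⊢
    linarith
  have h1 := key φ
  have h2 := key (Complex.I • φ)
  have e1 : ⟪Complex.I • φ, Ψ x ψ⟫ = -Complex.I * ⟪φ, Ψ x ψ⟫ := by
    rw [inner_smul_left]; simp [Complex.conj_I]
  have e2 : ⟪ψ, Ψ (star x) (Complex.I • φ)⟫ = Complex.I * ⟪ψ, Ψ (star x) φ⟫ := by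
    rw [map_smul, inner_smul_right]
  rw [e1, e2] at h2
  set α := ⟪φ, Ψ x ψ⟫
  set β := ⟪ψ, Ψ (star x) φ⟫
  simp only [Complex.add_im, Complex.mul_im, Complex.neg_re, Complex.neg_im,
    Complex.I_re, Complex.I_im] at h1 h2
  apply Complex.ext
  · simp only [Complex.conj_re]; linarith
  · simp only [Complex.conj_im]; linarith

variable {Ψ} in
lemma cp_herm' (hΨ : IsCompletelyPositive Ψ) (y : A) (v w : H) : ⟪Ψ y v, w⟫ = ⟪v, Ψ (star y) w⟫ := by
  rw [cp_herm hΨ y w v, inner_conj_symm]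

lemma exists_rep (t : A ⊗[ℂ] H) : ∃ (n : ℕ) (a : Fin n → A) (v : Fin n → H),
    t = ∑ i, a i ⊗ₜ[ℂ] v i := by
  obtain ⟨s, rfl⟩ := TensorProduct.exists_finset t
  refine ⟨s.card, fun i => ((s.equivFin.symm i : A × H)).1,
    fun i => ((s.equivFin.symm i : A × H)).2, ?_⟩
  rw [← Finset.sum_attach s (fun x => x.1 ⊗ₜ[ℂ] x.2)]
  exact Fintype.sum_equiv s.equivFin _ _ (fun x => by simp)

lemma gM_sum_sum {n m : ℕ} (a : Fin n → A) (v : Fin n → H) (b : Fin m → A) (w : Fin m → H) :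
    gM Ψ (∑ i, a i ⊗ₜ[ℂ] v i) (∑ j, b j ⊗ₜ[ℂ] w j)
      = ∑ j, ∑ i, ⟪Ψ (star (b j) * a i) (v i), w j⟫ := by
  simp [map_sum, sum_inner]

variable {Ψ} in
lemma gM_self_eq (hΨ : IsCompletelyPositive Ψ) {n : ℕ} (a : Fin n → A) (v : Fin n → H) :
    gM Ψ (∑ i, a i ⊗ₜ[ℂ] v i) (∑ i, a i ⊗ₜ[ℂ] v i)
      = ∑ j, ∑ k, ⟪v j, Ψ (star (a j) * a k) (v k)⟫ := by
  rw [gM_sum_sum]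
  refine (Finset.sum_congr rfl fun j _ => Finset.sum_congr rfl fun i _ => ?_).trans
    Finset.sum_comm
  rw [cp_herm' hΨ]
  simp [star_mul]

variable {Ψ} in
lemma gM_self_nonneg (hΨ : IsCompletelyPositive Ψ) (t : A ⊗[ℂ] H) : 0 ≤ gM Ψ t t := by
  obtain ⟨n, a, v, rfl⟩ := exists_rep t
  rw [gM_self_eq hΨ]
  exact hΨ n a v

variable {Ψ} in
lemma gM_conj_symm (hΨ : IsCompletelyPositive Ψ) (x y : A ⊗[ℂ] H) :
    starRingEnd ℂ (gM Ψ y x) = gM Ψ x y := by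
  induction x using TensorProduct.induction_on with
  | zero => simp
  | tmul a v =>
    induction y using TensorProduct.induction_on with
    | zero => simp
    | tmul b w =>
      simp only [gM_tmul, psiM_tmul, inner_conj_symm]
      rw [cp_herm' hΨ]
      simp [star_mul]
    | add y1 y2 h1 h2 =>
      rw [gM_add_left]
      simp only [map_add, LinearMap.add_apply, map_add] at h1 h2 ⊢
      rw [h1, h2]
  | add x1 x2 h1 h2 =>
    rw [gM_add_left]
    simp only [map_add, LinearMap.add_apply] at h1 h2 ⊢
    rw [h1, h2]

variable {Ψ} in
def preCore (hΨ : IsCompletelyPositive Ψ) : PreInnerProductSpace.Core ℂ (A ⊗[ℂ] H) where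
  inner s t := gM Ψ s t
  conj_inner_symm x y := gM_conj_symm hΨ x y
  re_inner_nonneg x := by
    have h := gM_self_nonneg hΨ x
    rw [Complex.le_def] at h
    simpa using h.1
  add_left x y z := by
    show gM Ψ (x + y) z = gM Ψ x z + gM Ψ y z
    rw [gM_add_left]; simp
  smul_left x z r := by
    show gM Ψ (r • x) z = starRingEnd ℂ r * gM Ψ x z
    rw [gM_smul_left]; simp

variable {Ψ} in
lemma gM_cs (hΨ : IsCompletelyPositive Ψ) (s t : A ⊗[ℂ] H) :
    ‖gM Ψ s t‖ * ‖gM Ψ t s‖ ≤ (gM Ψ s s).re * (gM Ψ t t).re := by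
  letI c : PreInnerProductSpace.Core ℂ (A ⊗[ℂ] H) := preCore hΨ
  exact InnerProductSpace.Core.inner_mul_inner_self_le (𝕜 := ℂ) (F := A ⊗[ℂ] H) s t


lemma pM_sum {n : ℕ} (a : Fin n → A) (v : Fin n → H) :
    pM π J (∑ i, a i ⊗ₜ[ℂ] v i) = ∑ i, π (a i) (J (v i)) := by
  simp [map_sum]

variable (Φ : A →ₗ[ℂ] H →L[ℂ] H)

lemma phi_sum (hdil : ∀ a : A, Φ a = ContinuousLinearMap.adjoint J ∘L π a ∘L J)
    {n : ℕ} (a : Fin n → A) (v : Fin n → H) :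
    ∑ j, ∑ k, ⟪v j, Φ (star (a j) * a k) (v k)⟫
      = ⟪pM π J (∑ i, a i ⊗ₜ[ℂ] v i), pM π J (∑ i, a i ⊗ₜ[ℂ] v i)⟫ := by
  rw [pM_sum, sum_inner]
  refine Finset.sum_congr rfl fun j _ => ?_
  rw [inner_sum]
  refine Finset.sum_congr rfl fun k _ => ?_
  rw [hdil]
  simp only [ContinuousLinearMap.coe_comp', Function.comp_apply, adjoint_inner_right]
  rw [map_mul, ContinuousLinearMap.mul_apply, map_star, star_eq_adjoint, adjoint_inner_right]

variable {Φ Ψ} in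
lemma gM_self_le (hΨ : IsCompletelyPositive Ψ) (hle : IsCompletelyPositive (Φ - Ψ))
    (hdil : ∀ a : A, Φ a = ContinuousLinearMap.adjoint J ∘L π a ∘L J) (t : A ⊗[ℂ] H) :
    gM Ψ t t ≤ ⟪pM π J t, pM π J t⟫ := by
  obtain ⟨n, a, v, rfl⟩ := exists_rep t
  rw [gM_self_eq hΨ]
  have h := hle n a v
  have hsplit : ∑ j, ∑ k, ⟪v j, (Φ - Ψ) (star (a j) * a k) (v k)⟫
      = (∑ j, ∑ k, ⟪v j, Φ (star (a j) * a k) (v k)⟫)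
        - ∑ j, ∑ k, ⟪v j, Ψ (star (a j) * a k) (v k)⟫ := by
    simp [LinearMap.sub_apply, ContinuousLinearMap.sub_apply, inner_sub_right,
      Finset.sum_sub_distrib]
  rw [hsplit, phi_sum π J Φ hdil] at h
  exact sub_nonneg.mp h

variable {Φ Ψ} in
lemma gM_self_re_nonneg (hΨ : IsCompletelyPositive Ψ) (t : A ⊗[ℂ] H) : 0 ≤ (gM Ψ t t).re := by
  have h := gM_self_nonneg hΨ t
  rw [Complex.le_def] at h
  simpa using h.1

variable {Φ Ψ} in
lemma gM_re_self_le (hΨ : IsCompletelyPositive Ψ) (hle : IsCompletelyPositive (Φ - Ψ))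
    (hdil : ∀ a : A, Φ a = ContinuousLinearMap.adjoint J ∘L π a ∘L J) (t : A ⊗[ℂ] H) :
    (gM Ψ t t).re ≤ ‖pM π J t‖ ^ 2 := by
  have h := gM_self_le π J hΨ hle hdil t
  rw [Complex.le_def] at h
  calc (gM Ψ t t).re ≤ (⟪pM π J t, pM π J t⟫).re := h.1
    _ = ‖pM π J t‖ ^ 2 := by
        have h2 := inner_self_eq_norm_sq (𝕜 := ℂ) (pM π J t)
        simpa [RCLike.re_to_complex] using h2

variable {Φ Ψ} in
lemma gM_norm_bound (hΨ : IsCompletelyPositive Ψ) (hle : IsCompletelyPositive (Φ - Ψ))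
    (hdil : ∀ a : A, Φ a = ContinuousLinearMap.adjoint J ∘L π a ∘L J) (t s : A ⊗[ℂ] H) :
    ‖gM Ψ t s‖ ≤ Real.sqrt ((gM Ψ t t).re) * ‖pM π J s‖ := by
  have hcs := gM_cs hΨ t s
  have hnorm : ‖gM Ψ s t‖ = ‖gM Ψ t s‖ := by
    rw [← gM_conj_symm hΨ s t, RCLike.norm_conj]
  have h2 : (gM Ψ s s).re ≤ ‖pM π J s‖ ^ 2 := gM_re_self_le π J hΨ hle hdil s
  have h3 : 0 ≤ (gM Ψ t t).re := gM_self_re_nonneg hΨ t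
  have h1 : ‖gM Ψ t s‖ ^ 2 ≤ (gM Ψ t t).re * ‖pM π J s‖ ^ 2 := by
    nlinarith [norm_nonneg (gM Ψ t s)]
  calc ‖gM Ψ t s‖ = Real.sqrt (‖gM Ψ t s‖ ^ 2) := (Real.sqrt_sq (norm_nonneg _)).symm
    _ ≤ Real.sqrt ((gM Ψ t t).re * ‖pM π J s‖ ^ 2) := Real.sqrt_le_sqrt h1
    _ = Real.sqrt ((gM Ψ t t).re) * ‖pM π J s‖ := by
        rw [Real.sqrt_mul h3, Real.sqrt_sq (norm_nonneg _)]

abbrev Dsub : Submodule ℂ M := LinearMap.range (pM π J)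

lemma range_pM_eq : (Dsub π J : Submodule ℂ M)
    = Submodule.span ℂ {m : M | ∃ (a : A) (v : H), m = π a (J v)} := by
  apply le_antisymm
  · rintro x ⟨t, rfl⟩
    induction t using TensorProduct.induction_on with
    | zero => rw [map_zero]; exact zero_mem _
    | tmul a v => exact Submodule.subset_span ⟨a, v, rfl⟩
    | add s t hs ht => rw [map_add]; exact add_mem hs ht
  · rw [Submodule.span_le]
    rintro x ⟨a, v, rfl⟩
    exact ⟨a ⊗ₜ[ℂ] v, rfl⟩

lemma dense_D
    (hmin : Dense (↑(Submodule.span ℂ {m : M | ∃ (a : A) (v : H), m = π a (J v)}) : Set M)) :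
    Dense ((Dsub π J : Submodule ℂ M) : Set M) := by
  rw [range_pM_eq]; exact hmin

variable {Φ Ψ} in
lemma gM_ker (hΨ : IsCompletelyPositive Ψ) (hle : IsCompletelyPositive (Φ - Ψ))
    (hdil : ∀ a : A, Φ a = ContinuousLinearMap.adjoint J ∘L π a ∘L J)
    {s : A ⊗[ℂ] H} (hs : pM π J s = 0) (t : A ⊗[ℂ] H) :
    gM Ψ t s = 0 ∧ gM Ψ s t = 0 := by
  have h0 : (gM Ψ s s).re = 0 := le_antisymm
    (by simpa [hs] using gM_re_self_le π J hΨ hle hdil s) (gM_self_re_nonneg hΨ s)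
  have hcs := gM_cs hΨ s t
  have hnorm : ‖gM Ψ s t‖ = ‖gM Ψ t s‖ := by
    rw [← gM_conj_symm hΨ s t, RCLike.norm_conj]
  have h3 : 0 ≤ (gM Ψ t t).re := gM_self_re_nonneg hΨ t
  have hz : gM Ψ t s = 0 := by
    have h4 : ‖gM Ψ t s‖ = 0 := le_antisymm (by nlinarith [norm_nonneg (gM Ψ t s)])
      (norm_nonneg _)
    exact norm_eq_zero.mp h4
  refine ⟨hz, ?_⟩
  rw [← gM_conj_symm hΨ s t, hz, map_zero]

variable {Φ Ψ} in
def fT0 (hΨ : IsCompletelyPositive Ψ) (hle : IsCompletelyPositive (Φ - Ψ))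
    (hdil : ∀ a : A, Φ a = ContinuousLinearMap.adjoint J ∘L π a ∘L J)
    (t : A ⊗[ℂ] H) : ↥(Dsub π J) →ₗ[ℂ] ℂ :=
  ((LinearMap.ker (pM π J)).liftQ (gM Ψ t)
      (fun s hs => (gM_ker π J hΨ hle hdil (LinearMap.mem_ker.mp hs) t).1)).comp
    ((pM π J).quotKerEquivRange.symm.toLinearMap)

variable {Φ Ψ} in
lemma fT0_apply (hΨ : IsCompletelyPositive Ψ) (hle : IsCompletelyPositive (Φ - Ψ))
    (hdil : ∀ a : A, Φ a = ContinuousLinearMap.adjoint J ∘L π a ∘L J)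
    (t s : A ⊗[ℂ] H) (h : pM π J s ∈ Dsub π J) :
    fT0 π J hΨ hle hdil t ⟨pM π J s, h⟩ = gM Ψ t s := by
  unfold fT0
  rw [LinearMap.comp_apply]
  have h1 : ((pM π J).quotKerEquivRange.symm.toLinearMap) ⟨pM π J s, h⟩
      = (LinearMap.ker (pM π J)).mkQ s := by
    exact (pM π J).quotKerEquivRange_symm_apply_image s h
  rw [h1]
  simp [Submodule.liftQ_apply]
  rfl

variable {Φ Ψ} in
lemma fT0_bound (hΨ : IsCompletelyPositive Ψ) (hle : IsCompletelyPositive (Φ - Ψ))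
    (hdil : ∀ a : A, Φ a = ContinuousLinearMap.adjoint J ∘L π a ∘L J)
    (t : A ⊗[ℂ] H) (y : ↥(Dsub π J)) :
    ‖fT0 π J hΨ hle hdil t y‖ ≤ Real.sqrt ((gM Ψ t t).re) * ‖y‖ := by
  obtain ⟨s, hs⟩ := y.2
  have hy : y = ⟨pM π J s, LinearMap.mem_range_self _ s⟩ := Subtype.ext hs.symm
  rw [hy, fT0_apply]
  exact gM_norm_bound π J hΨ hle hdil t s

variable {Φ Ψ} in
def fT (hΨ : IsCompletelyPositive Ψ) (hle : IsCompletelyPositive (Φ - Ψ))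
    (hdil : ∀ a : A, Φ a = ContinuousLinearMap.adjoint J ∘L π a ∘L J)
    (t : A ⊗[ℂ] H) : ↥(Dsub π J) →L[ℂ] ℂ :=
  LinearMap.mkContinuous (fT0 π J hΨ hle hdil t) (Real.sqrt ((gM Ψ t t).re))
    (fT0_bound π J hΨ hle hdil t)

lemma denseRange_subtypeL
    (hmin : Dense (↑(Submodule.span ℂ {m : M | ∃ (a : A) (v : H), m = π a (J v)}) : Set M)) :
    DenseRange ⇑(Dsub π J).subtypeL := by
  rw [Submodule.coe_subtypeL']
  show Dense (Set.range ((Dsub π J).subtype))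
  rw [Submodule.coe_subtype, Subtype.range_coe]
  exact dense_D π J hmin

lemma uniformInducing_subtypeL : IsUniformInducing ⇑(Dsub π J).subtypeL := by
  have h : Isometry ⇑(Dsub π J).subtypeL := by
    rw [Submodule.coe_subtypeL', Submodule.coe_subtype]
    exact isometry_subtype_coe
  exact h.isUniformInducing

variable {Φ Ψ}
variable (hΨ : IsCompletelyPositive Ψ) (hle : IsCompletelyPositive (Φ - Ψ))
  (hdil : ∀ a : A, Φ a = ContinuousLinearMap.adjoint J ∘L π a ∘L J)
  (hmin : Dense (↑(Submodule.span ℂ {m : M | ∃ (a : A) (v : H), m = π a (J v)}) : Set M))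

def Ffun (t : A ⊗[ℂ] H) : M →L[ℂ] ℂ :=
  let _hm := hmin
  (fT π J hΨ hle hdil t).extend (Dsub π J).subtypeL

lemma Ffun_apply (t s : A ⊗[ℂ] H) :
    Ffun π J hΨ hle hdil hmin t (pM π J s) = gM Ψ t s := by
  have h1 : pM π J s = (Dsub π J).subtypeL ⟨pM π J s, LinearMap.mem_range_self _ s⟩ := rfl
  rw [Ffun, h1, ContinuousLinearMap.extend_eq _ (denseRange_subtypeL π J hmin)
    (uniformInducing_subtypeL π J)]
  rw [fT, LinearMap.mkContinuous_apply, fT0_apply]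

def eT (t : A ⊗[ℂ] H) : M :=
  (InnerProductSpace.toDual ℂ M).symm (Ffun π J hΨ hle hdil hmin t)

lemma inner_eT_left (t : A ⊗[ℂ] H) (x : M) :
    ⟪eT π J hΨ hle hdil hmin t, x⟫ = Ffun π J hΨ hle hdil hmin t x :=
  InnerProductSpace.toDual_symm_apply

lemma inner_pM_eT (s t : A ⊗[ℂ] H) :
    ⟪pM π J s, eT π J hΨ hle hdil hmin t⟫ = gM Ψ s t := by
  rw [← inner_conj_symm, inner_eT_left, Ffun_apply]
  exact gM_conj_symm hΨ s t

lemma eT_norm (t : A ⊗[ℂ] H) : ‖eT π J hΨ hle hdil hmin t‖ ≤ ‖pM π J t‖ := by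
  have h1 : ‖eT π J hΨ hle hdil hmin t‖ = ‖Ffun π J hΨ hle hdil hmin t‖ :=
    LinearIsometryEquiv.norm_map _ _
  rw [h1]
  apply ContinuousLinearMap.opNorm_le_bound _ (norm_nonneg _)
  intro x
  have hsub : (↑(Dsub π J) : Set M)
      ⊆ {x : M | ‖Ffun π J hΨ hle hdil hmin t x‖ ≤ ‖pM π J t‖ * ‖x‖} := by
    intro y hy
    obtain ⟨s, rfl⟩ := hy
    rw [Set.mem_setOf_eq, Ffun_apply]
    calc ‖gM Ψ t s‖ ≤ Real.sqrt ((gM Ψ t t).re) * ‖pM π J s‖ :=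
          gM_norm_bound π J hΨ hle hdil t s
      _ ≤ ‖pM π J t‖ * ‖pM π J s‖ := by
          apply mul_le_mul_of_nonneg_right _ (norm_nonneg _)
          calc Real.sqrt ((gM Ψ t t).re) ≤ Real.sqrt (‖pM π J t‖ ^ 2) :=
                Real.sqrt_le_sqrt (gM_re_self_le π J hΨ hle hdil t)
            _ = ‖pM π J t‖ := Real.sqrt_sq (norm_nonneg _)
  have hclosed : IsClosed {x : M | ‖Ffun π J hΨ hle hdil hmin t x‖ ≤ ‖pM π J t‖ * ‖x‖} :=
    isClosed_le ((Ffun π J hΨ hle hdil hmin t).continuous.norm)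
      (continuous_const.mul continuous_norm)
  have hx : x ∈ closure (↑(Dsub π J) : Set M) := by
    rw [(dense_D π J hmin).closure_eq]; trivial
  exact closure_minimal hsub hclosed hx

def eLin : (A ⊗[ℂ] H) →ₗ[ℂ] M where
  toFun := eT π J hΨ hle hdil hmin
  map_add' t t' := by
    apply (dense_D π J hmin).eq_of_inner_right ℂ
    rintro y ⟨s, rfl⟩
    show ⟪pM π J s, eT π J hΨ hle hdil hmin (t + t')⟫
      = ⟪pM π J s, eT π J hΨ hle hdil hmin t + eT π J hΨ hle hdil hmin t'⟫
    rw [inner_pM_eT, inner_add_right, inner_pM_eT, inner_pM_eT, map_add]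
  map_smul' c t := by
    apply (dense_D π J hmin).eq_of_inner_right ℂ
    rintro y ⟨s, rfl⟩
    show ⟪pM π J s, eT π J hΨ hle hdil hmin (c • t)⟫
      = ⟪pM π J s, c • eT π J hΨ hle hdil hmin t⟫
    rw [inner_pM_eT, inner_smul_right, inner_pM_eT, map_smul, smul_eq_mul]

lemma eT_ker {t : A ⊗[ℂ] H} (ht : pM π J t = 0) : eT π J hΨ hle hdil hmin t = 0 := by
  apply (dense_D π J hmin).eq_zero_of_inner_right ℂ
  rintro y ⟨s, rfl⟩
  show ⟪pM π J s, eT π J hΨ hle hdil hmin t⟫ = 0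
  rw [inner_pM_eT]
  exact (gM_ker π J hΨ hle hdil ht s).1

def E0 : ↥(Dsub π J) →ₗ[ℂ] M :=
  ((LinearMap.ker (pM π J)).liftQ (eLin π J hΨ hle hdil hmin) (fun t ht =>
      eT_ker π J hΨ hle hdil hmin (LinearMap.mem_ker.mp ht))).comp
    ((pM π J).quotKerEquivRange.symm.toLinearMap)

lemma E0_apply (t : A ⊗[ℂ] H) (h : pM π J t ∈ Dsub π J) :
    E0 π J hΨ hle hdil hmin ⟨pM π J t, h⟩ = eT π J hΨ hle hdil hmin t := by
  unfold E0
  rw [LinearMap.comp_apply]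
  have h1 : ((pM π J).quotKerEquivRange.symm.toLinearMap) ⟨pM π J t, h⟩
      = (LinearMap.ker (pM π J)).mkQ t :=
    (pM π J).quotKerEquivRange_symm_apply_image t h
  rw [h1]
  simp [Submodule.liftQ_apply]
  rfl

lemma E0_bound (y : ↥(Dsub π J)) : ‖E0 π J hΨ hle hdil hmin y‖ ≤ 1 * ‖y‖ := by
  obtain ⟨t, ht⟩ := y.2
  have hy : y = ⟨pM π J t, LinearMap.mem_range_self _ t⟩ := Subtype.ext ht.symm
  rw [hy, E0_apply, one_mul]
  exact eT_norm π J hΨ hle hdil hmin t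

def Eop : M →L[ℂ] M :=
  let _hm := hmin
  (LinearMap.mkContinuous (E0 π J hΨ hle hdil hmin) 1 (E0_bound π J hΨ hle hdil hmin)).extend
    (Dsub π J).subtypeL

lemma Eop_apply (t : A ⊗[ℂ] H) :
    Eop π J hΨ hle hdil hmin (pM π J t) = eT π J hΨ hle hdil hmin t := by
  have h1 : pM π J t = (Dsub π J).subtypeL ⟨pM π J t, LinearMap.mem_range_self _ t⟩ := rfl
  rw [Eop, h1, ContinuousLinearMap.extend_eq _ (denseRange_subtypeL π J hmin)
    (uniformInducing_subtypeL π J), LinearMap.mkContinuous_apply, E0_apply]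

def rho (a : A) : A ⊗[ℂ] H →ₗ[ℂ] A ⊗[ℂ] H := LinearMap.rTensor H (LinearMap.mulLeft ℂ a)

@[simp] lemma rho_tmul (a b : A) (v : H) : rho (H := H) a (b ⊗ₜ[ℂ] v) = (a * b) ⊗ₜ[ℂ] v := rfl

lemma pM_rho (a : A) (t : A ⊗[ℂ] H) : pM π J (rho a t) = π a (pM π J t) := by
  induction t using TensorProduct.induction_on with
  | zero => simp
  | tmul b v => simp [map_mul]
  | add s t hs ht => simp [map_add, hs, ht]

lemma gM_rho (a : A) (s t : A ⊗[ℂ] H) : gM Ψ s (rho a t) = gM Ψ (rho (star a) s) t := by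
  induction t using TensorProduct.induction_on with
  | zero => simp
  | tmul b w =>
    show gM Ψ s ((a * b) ⊗ₜ[ℂ] w) = _
    induction s using TensorProduct.induction_on with
    | zero => simp
    | tmul a' v' => simp [mul_assoc, star_mul]
    | add s1 s2 h1 h2 =>
      rw [map_add, gM_add_left, gM_add_left] at *
      simp only [LinearMap.add_apply] at h1 h2 ⊢
      rw [h1, h2]
  | add t1 t2 h1 h2 => simp [map_add, h1, h2]

lemma eT_rho (a : A) (t : A ⊗[ℂ] H) :
    eT π J hΨ hle hdil hmin (rho a t) = π a (eT π J hΨ hle hdil hmin t) := by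
  apply (dense_D π J hmin).eq_of_inner_right ℂ
  rintro y ⟨s, rfl⟩
  show ⟪pM π J s, eT π J hΨ hle hdil hmin (rho a t)⟫
    = ⟪pM π J s, π a (eT π J hΨ hle hdil hmin t)⟫
  rw [inner_pM_eT]
  have h2 : ⟪pM π J s, π a (eT π J hΨ hle hdil hmin t)⟫
      = ⟪π (star a) (pM π J s), eT π J hΨ hle hdil hmin t⟫ := by
    rw [map_star, star_eq_adjoint, adjoint_inner_left]
  rw [h2, ← pM_rho, inner_pM_eT]
  exact gM_rho a s t

lemma pM_one_tmul (v : H) : pM π J ((1 : A) ⊗ₜ[ℂ] v) = J v := by simp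

lemma Eop_comm (a : A) : ∀ x : M,
    Eop π J hΨ hle hdil hmin (π a x) = π a (Eop π J hΨ hle hdil hmin x) := by
  have h : Set.EqOn (⇑(Eop π J hΨ hle hdil hmin ∘L π a)) (⇑(π a ∘L Eop π J hΨ hle hdil hmin))
      (↑(Dsub π J) : Set M) := by
    rintro y ⟨t, rfl⟩
    show Eop π J hΨ hle hdil hmin (π a (pM π J t)) = π a (Eop π J hΨ hle hdil hmin (pM π J t))
    rw [← pM_rho, Eop_apply, Eop_apply, eT_rho]
  have h2 := Continuous.ext_on (dense_D π J hmin)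
    (Eop π J hΨ hle hdil hmin ∘L π a).continuous (π a ∘L Eop π J hΨ hle hdil hmin).continuous h
  intro x
  exact congrFun h2 x

lemma Eop_formula (a : A) :
    Ψ a = (ContinuousLinearMap.adjoint J) ∘L (π a ∘L Eop π J hΨ hle hdil hmin) ∘L J := by
  apply ContinuousLinearMap.ext
  intro v
  apply ext_inner_left ℂ
  intro w
  symm
  have h1 : Eop π J hΨ hle hdil hmin (J v) = eT π J hΨ hle hdil hmin ((1 : A) ⊗ₜ[ℂ] v) := by
    rw [← pM_one_tmul π J v, Eop_apply]
  have hb : (π (star a) : M →L[ℂ] M) = ContinuousLinearMap.adjoint (π a) := by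
    rw [map_star, star_eq_adjoint]
  calc ⟪w, ((ContinuousLinearMap.adjoint J) ∘L (π a ∘L Eop π J hΨ hle hdil hmin) ∘L J) v⟫
      = ⟪J w, π a (Eop π J hΨ hle hdil hmin (J v))⟫ := by
        simp only [ContinuousLinearMap.coe_comp', Function.comp_apply, adjoint_inner_right]
    _ = ⟪π (star a) (J w), eT π J hΨ hle hdil hmin ((1 : A) ⊗ₜ[ℂ] v)⟫ := by
        rw [h1, hb, adjoint_inner_left]
    _ = ⟪pM π J ((star a) ⊗ₜ[ℂ] w), eT π J hΨ hle hdil hmin ((1 : A) ⊗ₜ[ℂ] v)⟫ := by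
        rw [pM_tmul]
    _ = gM Ψ ((star a) ⊗ₜ[ℂ] w) ((1 : A) ⊗ₜ[ℂ] v) := inner_pM_eT π J hΨ hle hdil hmin _ _
    _ = ⟪Ψ (star 1 * star a) w, v⟫ := rfl
    _ = ⟪w, Ψ a v⟫ := by
        rw [cp_herm' hΨ]
        simp

include hΨ in
lemma Eop_char (E' : M →L[ℂ] M) (hc : ∀ a : A, ∀ x : M, E' (π a x) = π a (E' x))
    (hf : ∀ a : A, Ψ a = (ContinuousLinearMap.adjoint J) ∘L (π a ∘L E') ∘L J)
    (s t : A ⊗[ℂ] H) :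
    ⟪pM π J s, E' (pM π J t)⟫ = gM Ψ s t := by
  induction s using TensorProduct.induction_on with
  | zero => simp
  | tmul b w =>
    induction t using TensorProduct.induction_on with
    | zero => simp
    | tmul a v =>
      have hb : (π b : M →L[ℂ] M) = ContinuousLinearMap.adjoint (π (star b)) := by
        rw [← star_eq_adjoint, ← map_star, star_star]
      calc ⟪pM π J (b ⊗ₜ[ℂ] w), E' (pM π J (a ⊗ₜ[ℂ] v))⟫
          = ⟪π b (J w), E' (π a (J v))⟫ := rfl
        _ = ⟪J w, π (star b) (E' (π a (J v)))⟫ := by rw [hb, adjoint_inner_left]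
        _ = ⟪J w, π (star b) (π a (E' (J v)))⟫ := by rw [hc a (J v)]
        _ = ⟪J w, π (star b * a) (E' (J v))⟫ := by
            rw [map_mul, ContinuousLinearMap.mul_apply]
        _ = ⟪w, Ψ (star b * a) v⟫ := by
            rw [hf (star b * a)]
            simp only [ContinuousLinearMap.coe_comp', Function.comp_apply, adjoint_inner_right]
        _ = gM Ψ (b ⊗ₜ[ℂ] w) (a ⊗ₜ[ℂ] v) := by
            rw [gM_tmul, psiM_tmul, cp_herm' hΨ]
            simp [star_mul]
    | add t1 t2 h1 h2 =>
      rw [map_add, map_add, inner_add_right, h1, h2, map_add]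
  | add s1 s2 h1 h2 =>
    rw [map_add, inner_add_left, h1, h2, gM_add_left]
    simp

lemma Eop_unique (E' : M →L[ℂ] M) (hc : ∀ a : A, ∀ x : M, E' (π a x) = π a (E' x))
    (hf : ∀ a : A, Ψ a = (ContinuousLinearMap.adjoint J) ∘L (π a ∘L E') ∘L J) :
    E' = Eop π J hΨ hle hdil hmin := by
  apply ContinuousLinearMap.ext_on (s := (↑(Dsub π J) : Set M))
    (by rw [Submodule.span_eq]; exact dense_D π J hmin)
  rintro y ⟨t, rfl⟩
  apply (dense_D π J hmin).eq_of_inner_right ℂ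
  rintro z ⟨s, rfl⟩
  show ⟪pM π J s, E' (pM π J t)⟫ = ⟪pM π J s, Eop π J hΨ hle hdil hmin (pM π J t)⟫
  rw [Eop_char π J hΨ E' hc hf,
    Eop_char π J hΨ _ (Eop_comm π J hΨ hle hdil hmin) (Eop_formula π J hΨ hle hdil hmin)]

end CPRN


/-- **Radon–Nikodym theorem for completely positive maps** (Proposition 2 of the paper).
If `Ψ ≤ Φ` are completely positive maps `A → L(H)` (i.e. `Φ - Ψ` is completely positive)
and `(M, π, J)` is a minimal Stinespring dilation of `Φ`, then there is a unique operator
`E ∈ L(M)` commuting with the range of `π` such that `Ψ a = J⋆ ∘ π a ∘ E ∘ J` for all `a`. -/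
theorem cp_radon_nikodym
    {A : Type*} [CStarAlgebra A]
    {H M : Type*} [NormedAddCommGroup H] [InnerProductSpace ℂ H] [CompleteSpace H]
    [NormedAddCommGroup M] [InnerProductSpace ℂ M] [CompleteSpace M]
    (Φ Ψ : A →ₗ[ℂ] H →L[ℂ] H)
    (hΦ : IsCompletelyPositive Φ) (hΨ : IsCompletelyPositive Ψ)
    (hle : IsCompletelyPositive (Φ - Ψ))
    (π : A →⋆ₐ[ℂ] (M →L[ℂ] M)) (J : H →L[ℂ] M)
    (hdil : IsMinimalStinespring Φ π J) :
    ∃! E : M →L[ℂ] M, (∀ a : A, Commute E (π a)) ∧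
      ∀ a : A, Ψ a = (ContinuousLinearMap.adjoint J) ∘L (π a ∘L E) ∘L J := by
  have hdil' : ∀ a : A, Φ a = (ContinuousLinearMap.adjoint J) ∘L π a ∘L J := hdil.dilation
  have hmin : Dense (↑(Submodule.span ℂ {m : M | ∃ (a : A) (v : H), m = π a (J v)}) : Set M) :=
    hdil.minimal
  refine ⟨CPRN.Eop π J hΨ hle hdil' hmin, ⟨fun a => ?_, fun a => ?_⟩, fun E' hE' => ?_⟩
  · have h := CPRN.Eop_comm π J hΨ hle hdil' hmin a
    unfold Commute SemiconjBy
    ext x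
    simp only [ContinuousLinearMap.mul_apply]
    exact h x
  · exact CPRN.Eop_formula π J hΨ hle hdil' hmin a
  · obtain ⟨hc, hf⟩ := hE'
    refine CPRN.Eop_unique π J hΨ hle hdil' hmin E' (fun a x => ?_) hf
    have h := hc a
    calc E' (π a x) = (E' * π a) x := rfl
      _ = (π a * E') x := by rw [h]
      _ = π a (E' x) := rfl
end
end

section
/- Let A be a von Neumann algebra, H a complex Hilbert space, P ∈ L(H) a positive operator, and Φ ∈ CP_P(A;H) with minimal Stinespring dilation (M, π, J). Then Φ is an extremal point of the convex set CP_P(A;H) if and only if for every operator E ∈ L(M), the conditions [E, π(a)] = 0 for all a ∈ A and J*EJ = 0 imply E = 0. -/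
open scoped ComplexOrder ComplexInnerProductSpace Topology

noncomputable section

namespace ArvAux

open ContinuousLinearMap

variable {A : Type*} [CStarAlgebra A]
  {H M : Type*} [NormedAddCommGroup H] [InnerProductSpace ℂ H] [CompleteSpace H]
  [NormedAddCommGroup M] [InnerProductSpace ℂ M] [CompleteSpace M]

lemma cp_fintype {Ψ : A →ₗ[ℂ] H →L[ℂ] H} (hΨ : IsCompletelyPositive Ψ)
    {ι : Type*} [Fintype ι] (a : ι → A) (v : ι → H) :
    0 ≤ ∑ j, ∑ k, ⟪v j, Ψ (star (a j) * a k) (v k)⟫ := by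
  classical
  obtain e := (Fintype.equivFin ι).symm
  have h := hΨ (Fintype.card ι) (a ∘ e) (v ∘ e)
  calc (0:ℂ) ≤ ∑ j, ∑ k, ⟪(v ∘ e) j, Ψ (star ((a ∘ e) j) * (a ∘ e) k) ((v ∘ e) k)⟫ := h
  _ = ∑ j, ∑ k, ⟪v j, Ψ (star (a j) * a k) (v k)⟫ := by
      refine Fintype.sum_equiv e _ _ fun j => ?_
      exact Fintype.sum_equiv e _ _ fun k => rfl

lemma im_zero_of_nonneg {z : ℂ} (h : 0 ≤ z) : z.im = 0 := by
  rw [Complex.nonneg_iff] at h; exact h.2.symm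

lemma re_nonneg_of_nonneg {z : ℂ} (h : 0 ≤ z) : 0 ≤ z.re := by
  rw [Complex.nonneg_iff] at h; exact h.1

/-- A completely positive map is "hermitian" at the level of matrix elements. -/
lemma cp_conj {Ψ : A →ₗ[ℂ] H →L[ℂ] H} (hΨ : IsCompletelyPositive Ψ)
    (a b : A) (v w : H) :
    (starRingEnd ℂ) ⟪w, Ψ (star b * a) v⟫ = ⟪v, Ψ (star a * b) w⟫ := by
  have diag : ∀ (c : A) (u : H), (⟪u, Ψ (star c * c) u⟫).im = 0 := by
    intro c u
    have := hΨ 1 (fun _ => c) (fun _ => u)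
    simp only [Fin.sum_univ_one] at this
    exact im_zero_of_nonneg this
  have pair : ∀ (v' : H), (⟪v', Ψ (star a * b) w⟫ + ⟪w, Ψ (star b * a) v'⟫).im = 0 := by
    intro v'
    have h := hΨ 2 ![a, b] ![v', w]
    have h' := im_zero_of_nonneg h
    rw [Fin.sum_univ_two, Fin.sum_univ_two, Fin.sum_univ_two] at h'
    simp only [Matrix.cons_val_zero, Matrix.cons_val_one, Matrix.head_cons] at h'
    rw [Complex.add_im, Complex.add_im, Complex.add_im, diag a v', diag b w] at h'
    simpa [Complex.add_im] using h'
  set z := ⟪v, Ψ (star a * b) w⟫ with hz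
  set y := ⟪w, Ψ (star b * a) v⟫ with hy
  have h1 : (z + y).im = 0 := pair v
  have h2 : ((- Complex.I) * z + Complex.I * y).im = 0 := by
    have := pair (Complex.I • v)
    rw [inner_smul_left, map_smul, inner_smul_right] at this
    simpa [Complex.conj_I, hz, hy] using this
  apply Complex.ext
  · -- real parts
    have := h2
    simp only [Complex.add_im, Complex.mul_im, Complex.neg_re, Complex.neg_im,
      Complex.I_re, Complex.I_im] at this
    simp only [Complex.conj_re]
    linarith
  · have := h1
    simp only [Complex.add_im] at this
    simp only [Complex.conj_im]
    linarith

end ArvAux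

namespace ArvAux

set_option linter.unusedSectionVars false

open ContinuousLinearMap

variable {A : Type*} [CStarAlgebra A]
  {H M : Type*} [NormedAddCommGroup H] [InnerProductSpace ℂ H] [CompleteSpace H]
  [NormedAddCommGroup M] [InnerProductSpace ℂ M] [CompleteSpace M]

/-- The sesquilinear form associated to `Ψ` on formal combinations of symbols `(a, v)`. -/
def Bfun (Ψ : A →ₗ[ℂ] H →L[ℂ] H) (f g : (A × H) →₀ ℂ) : ℂ :=
  ∑ p ∈ f.support, ∑ q ∈ g.support, ⟪f p • p.2, Ψ (star p.1 * q.1) (g q • q.2)⟫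

lemma Bfun_eq_sum (Ψ : A →ₗ[ℂ] H →L[ℂ] H) (f g : (A × H) →₀ ℂ)
    {u u' : Finset (A × H)} (hu : f.support ⊆ u) (hu' : g.support ⊆ u') :
    Bfun Ψ f g = ∑ p ∈ u, ∑ q ∈ u', ⟪f p • p.2, Ψ (star p.1 * q.1) (g q • q.2)⟫ := by
  rw [Bfun]
  rw [Finset.sum_subset hu (fun p _ hp => ?_)]
  · refine Finset.sum_congr rfl fun p _ => ?_
    rw [Finset.sum_subset hu' (fun q _ hq => ?_)]
    rw [Finsupp.notMem_support_iff.1 hq, zero_smul, map_zero, inner_zero_right]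
  · apply Finset.sum_eq_zero
    intro q _
    rw [Finsupp.notMem_support_iff.1 hp, zero_smul, inner_zero_left]

lemma Bfun_add_left (Ψ : A →ₗ[ℂ] H →L[ℂ] H) (f f' g : (A × H) →₀ ℂ) :
    Bfun Ψ (f + f') g = Bfun Ψ f g + Bfun Ψ f' g := by
  classical
  rw [Bfun_eq_sum Ψ (f + f') g (u := f.support ∪ f'.support) (u' := g.support)
      (Finsupp.support_add) (le_refl _),
    Bfun_eq_sum Ψ f g (u := f.support ∪ f'.support) (u' := g.support)
      Finset.subset_union_left (le_refl _),
    Bfun_eq_sum Ψ f' g (u := f.support ∪ f'.support) (u' := g.support)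
      Finset.subset_union_right (le_refl _), ← Finset.sum_add_distrib]
  refine Finset.sum_congr rfl fun p _ => ?_
  rw [← Finset.sum_add_distrib]
  refine Finset.sum_congr rfl fun q _ => ?_
  rw [Finsupp.add_apply, add_smul, inner_add_left]

lemma Bfun_smul_left (Ψ : A →ₗ[ℂ] H →L[ℂ] H) (c : ℂ) (f g : (A × H) →₀ ℂ) :
    Bfun Ψ (c • f) g = (starRingEnd ℂ) c * Bfun Ψ f g := by
  classical
  rw [Bfun_eq_sum Ψ (c • f) g (u := f.support) (u' := g.support)
      (Finsupp.support_smul) (le_refl _), Bfun, Finset.mul_sum]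
  refine Finset.sum_congr rfl fun p _ => ?_
  rw [Finset.mul_sum]
  refine Finset.sum_congr rfl fun q _ => ?_
  rw [Finsupp.smul_apply, smul_eq_mul, mul_smul, inner_smul_left]

lemma Bfun_conj_symm {Ψ : A →ₗ[ℂ] H →L[ℂ] H} (hΨ : IsCompletelyPositive Ψ)
    (f g : (A × H) →₀ ℂ) :
    (starRingEnd ℂ) (Bfun Ψ g f) = Bfun Ψ f g := by
  rw [Bfun, Bfun, map_sum, Finset.sum_comm]
  refine Finset.sum_congr rfl fun p _ => ?_
  rw [map_sum]
  refine Finset.sum_congr rfl fun q _ => ?_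
  exact cp_conj hΨ q.1 p.1 (f q • q.2) (g p • p.2)

lemma Bfun_nonneg {Ψ : A →ₗ[ℂ] H →L[ℂ] H} (hΨ : IsCompletelyPositive Ψ)
    (f : (A × H) →₀ ℂ) : 0 ≤ Bfun Ψ f f := by
  classical
  have h := cp_fintype hΨ (ι := ↥(f.support)) (fun p => (p : A × H).1)
    (fun p => f (p : A × H) • (p : A × H).2)
  calc (0:ℂ) ≤ _ := h
  _ = Bfun Ψ f f := by
      rw [Bfun, ← Finset.sum_coe_sort (f.support)]
      refine Finset.sum_congr rfl fun p _ => ?_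
      rw [← Finset.sum_coe_sort (f.support)]

lemma Bfun_sub (Φ Ψ : A →ₗ[ℂ] H →L[ℂ] H) (f g : (A × H) →₀ ℂ) :
    Bfun (Φ - Ψ) f g = Bfun Φ f g - Bfun Ψ f g := by
  rw [Bfun, Bfun, Bfun, ← Finset.sum_sub_distrib]
  refine Finset.sum_congr rfl fun p _ => ?_
  rw [← Finset.sum_sub_distrib]
  refine Finset.sum_congr rfl fun q _ => ?_
  rw [LinearMap.sub_apply, ContinuousLinearMap.sub_apply, inner_sub_right]

/-- The generators `π a (J v)` of the minimal Stinespring space. -/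
def gen (π : A →⋆ₐ[ℂ] (M →L[ℂ] M)) (J : H →L[ℂ] M) : A × H → M := fun p => π p.1 (J p.2)

/-- The canonical map from formal combinations onto the span of the generators. -/
def lam (π : A →⋆ₐ[ℂ] (M →L[ℂ] M)) (J : H →L[ℂ] M) : ((A × H) →₀ ℂ) →ₗ[ℂ] M :=
  Finsupp.linearCombination ℂ (gen π J)

lemma inner_gen {Φ : A →ₗ[ℂ] H →L[ℂ] H} {π : A →⋆ₐ[ℂ] (M →L[ℂ] M)} {J : H →L[ℂ] M}
    (hdil : IsMinimalStinespring Φ π J) (p q : A × H) :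
    ⟪gen π J p, gen π J q⟫ = ⟪p.2, Φ (star p.1 * q.1) q.2⟫ := by
  rw [hdil.dilation, ContinuousLinearMap.comp_apply, ContinuousLinearMap.comp_apply,
    ContinuousLinearMap.adjoint_inner_right, map_mul, map_star,
    ContinuousLinearMap.star_eq_adjoint, ContinuousLinearMap.mul_apply,
    ContinuousLinearMap.adjoint_inner_right]
  rfl

lemma inner_lam {Φ : A →ₗ[ℂ] H →L[ℂ] H} {π : A →⋆ₐ[ℂ] (M →L[ℂ] M)} {J : H →L[ℂ] M}
    (hdil : IsMinimalStinespring Φ π J) (f g : (A × H) →₀ ℂ) :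
    ⟪lam π J f, lam π J g⟫ = Bfun Φ f g := by
  rw [lam, Finsupp.linearCombination_apply, Finsupp.linearCombination_apply,
    Finsupp.sum, Finsupp.sum, sum_inner, Bfun]
  refine Finset.sum_congr rfl fun p _ => ?_
  rw [inner_sum]
  refine Finset.sum_congr rfl fun q _ => ?_
  rw [inner_smul_left, inner_smul_right, inner_gen hdil, inner_smul_left, map_smul,
    inner_smul_right]

end ArvAux

namespace ArvAux

set_option linter.unusedSectionVars false

open ContinuousLinearMap

variable {A : Type*} [CStarAlgebra A]
  {H M : Type*} [NormedAddCommGroup H] [InnerProductSpace ℂ H] [CompleteSpace H]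
  [NormedAddCommGroup M] [InnerProductSpace ℂ M] [CompleteSpace M]
  {Φ Ψ : A →ₗ[ℂ] H →L[ℂ] H} {π : A →⋆ₐ[ℂ] (M →L[ℂ] M)} {J : H →L[ℂ] M}

lemma Bfun_re_le (hdil : IsMinimalStinespring Φ π J)
    (hΨ : IsCompletelyPositive Ψ) (hdom : IsCompletelyPositive (Φ - Ψ))
    (f : (A × H) →₀ ℂ) : (Bfun Ψ f f).re ≤ ‖lam π J f‖ ^ 2 := by
  have h0 : 0 ≤ Bfun Φ f f - Bfun Ψ f f := by
    rw [← Bfun_sub]; exact Bfun_nonneg hdom f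
  have h1 : (Bfun Ψ f f).re ≤ (Bfun Φ f f).re := by
    have := re_nonneg_of_nonneg h0
    rw [Complex.sub_re] at this; linarith
  refine h1.trans_eq ?_
  rw [← inner_lam hdil, inner_self_eq_norm_sq_to_K]
  norm_cast

lemma Bfun_bound (hdil : IsMinimalStinespring Φ π J)
    (hΨ : IsCompletelyPositive Ψ) (hdom : IsCompletelyPositive (Φ - Ψ))
    (f g : (A × H) →₀ ℂ) : ‖Bfun Ψ f g‖ ≤ ‖lam π J f‖ * ‖lam π J g‖ := by
  letI core : PreInnerProductSpace.Core ℂ ((A × H) →₀ ℂ) :=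
    { inner := Bfun Ψ
      conj_inner_symm := fun x y => Bfun_conj_symm hΨ x y
      re_inner_nonneg := fun x => re_nonneg_of_nonneg (Bfun_nonneg hΨ x)
      add_left := fun x y z => Bfun_add_left Ψ x y z
      smul_left := fun x y r => Bfun_smul_left Ψ r x y }
  have cs : ‖Bfun Ψ f g‖ * ‖Bfun Ψ g f‖ ≤ (Bfun Ψ f f).re * (Bfun Ψ g g).re :=
    InnerProductSpace.Core.inner_mul_inner_self_le (𝕜 := ℂ) (c := core) f g
  have hsym : ‖Bfun Ψ g f‖ = ‖Bfun Ψ f g‖ := by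
    rw [← Bfun_conj_symm hΨ f g, RCLike.norm_conj]
  rw [hsym] at cs
  have hf := Bfun_re_le hdil hΨ hdom f
  have hg := Bfun_re_le hdil hΨ hdom g
  have h2 : ‖Bfun Ψ f g‖ ^ 2 ≤ (‖lam π J f‖ * ‖lam π J g‖) ^ 2 := by
    rw [sq, sq]
    calc ‖Bfun Ψ f g‖ * ‖Bfun Ψ f g‖ ≤ (Bfun Ψ f f).re * (Bfun Ψ g g).re := cs
    _ ≤ ‖lam π J f‖ ^ 2 * ‖lam π J g‖ ^ 2 := by
        have h3 : (0:ℝ) ≤ (Bfun Ψ f f).re := re_nonneg_of_nonneg (Bfun_nonneg hΨ f)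
        have h4 : (0:ℝ) ≤ (Bfun Ψ g g).re := re_nonneg_of_nonneg (Bfun_nonneg hΨ g)
        exact mul_le_mul hf hg h4 (by positivity)
    _ = ‖lam π J f‖ * ‖lam π J g‖ * (‖lam π J f‖ * ‖lam π J g‖) := by ring
  exact (pow_le_pow_iff_left₀ (norm_nonneg _) (by positivity) two_ne_zero).1 h2

lemma Bfun_ker_left (hdil : IsMinimalStinespring Φ π J)
    (hΨ : IsCompletelyPositive Ψ) (hdom : IsCompletelyPositive (Φ - Ψ))
    {f : (A × H) →₀ ℂ} (hf : lam π J f = 0) (g : (A × H) →₀ ℂ) :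
    Bfun Ψ f g = 0 := by
  have := Bfun_bound hdil hΨ hdom f g
  rw [hf, norm_zero, zero_mul] at this
  exact norm_le_zero_iff.1 this

lemma Bfun_ker_right (hdil : IsMinimalStinespring Φ π J)
    (hΨ : IsCompletelyPositive Ψ) (hdom : IsCompletelyPositive (Φ - Ψ))
    {f : (A × H) →₀ ℂ} (hf : lam π J f = 0) (g : (A × H) →₀ ℂ) :
    Bfun Ψ g f = 0 := by
  have := Bfun_bound hdil hΨ hdom g f
  rw [hf, norm_zero, mul_zero] at this
  exact norm_le_zero_iff.1 this

end ArvAux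

namespace ArvAux

set_option linter.unusedSectionVars false
set_option maxHeartbeats 1000000

open ContinuousLinearMap
open scoped NNReal

variable {A : Type*} [CStarAlgebra A]
  {H M : Type*} [NormedAddCommGroup H] [InnerProductSpace ℂ H] [CompleteSpace H]
  [NormedAddCommGroup M] [InnerProductSpace ℂ M] [CompleteSpace M]
  {Φ Ψ : A →ₗ[ℂ] H →L[ℂ] H} {π : A →⋆ₐ[ℂ] (M →L[ℂ] M)} {J : H →L[ℂ] M}

lemma Bfun_add_right (Ψ : A →ₗ[ℂ] H →L[ℂ] H) (f g g' : (A × H) →₀ ℂ) :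
    Bfun Ψ f (g + g') = Bfun Ψ f g + Bfun Ψ f g' := by
  classical
  rw [Bfun_eq_sum Ψ f (g + g') (u := f.support) (u' := g.support ∪ g'.support)
      (le_refl _) Finsupp.support_add,
    Bfun_eq_sum Ψ f g (u := f.support) (u' := g.support ∪ g'.support)
      (le_refl _) Finset.subset_union_left,
    Bfun_eq_sum Ψ f g' (u := f.support) (u' := g.support ∪ g'.support)
      (le_refl _) Finset.subset_union_right, ← Finset.sum_add_distrib]
  refine Finset.sum_congr rfl fun p _ => ?_
  rw [← Finset.sum_add_distrib]
  refine Finset.sum_congr rfl fun q _ => ?_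
  rw [Finsupp.add_apply, add_smul, map_add, inner_add_right]

lemma Bfun_smul_right (Ψ : A →ₗ[ℂ] H →L[ℂ] H) (c : ℂ) (f g : (A × H) →₀ ℂ) :
    Bfun Ψ f (c • g) = c * Bfun Ψ f g := by
  classical
  rw [Bfun_eq_sum Ψ f (c • g) (u := f.support) (u' := g.support)
      (le_refl _) Finsupp.support_smul, Bfun, Finset.mul_sum]
  refine Finset.sum_congr rfl fun p _ => ?_
  rw [Finset.mul_sum]
  refine Finset.sum_congr rfl fun q _ => ?_
  rw [Finsupp.smul_apply, smul_eq_mul, mul_smul, map_smul, inner_smul_right]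

/-- `Bfun Ψ g ·` as a linear map. -/
def BL (Ψ : A →ₗ[ℂ] H →L[ℂ] H) (g : (A × H) →₀ ℂ) : ((A × H) →₀ ℂ) →ₗ[ℂ] ℂ where
  toFun f := Bfun Ψ g f
  map_add' f f' := Bfun_add_right Ψ g f f'
  map_smul' c f := Bfun_smul_right Ψ c g f

lemma range_lam :
    LinearMap.range (lam π J) = Submodule.span ℂ {m : M | ∃ (a : A) (v : H), m = π a (J v)} := by
  rw [lam, Finsupp.range_linearCombination]
  congr 1
  ext m
  constructor
  · rintro ⟨p, rfl⟩; exact ⟨p.1, p.2, rfl⟩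
  · rintro ⟨a, v, rfl⟩; exact ⟨(a, v), rfl⟩

lemma dense_range_lam (hdil : IsMinimalStinespring Φ π J) :
    Dense ((LinearMap.range (lam π J) : Submodule ℂ M) : Set M) := by
  rw [range_lam]; exact hdil.minimal

/-- The functional `f ↦ Bfun Ψ g f` descended to the range of `lam`. -/
def psiQ (hdil : IsMinimalStinespring Φ π J) (hΨ : IsCompletelyPositive Ψ)
    (hdom : IsCompletelyPositive (Φ - Ψ)) (g : (A × H) →₀ ℂ) :
    ↥(LinearMap.range (lam π J)) →ₗ[ℂ] ℂ :=
  (Submodule.liftQ (LinearMap.ker (lam π J)) (BL Ψ g)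
    (fun f hf => LinearMap.mem_ker.2 (Bfun_ker_right hdil hΨ hdom (LinearMap.mem_ker.1 hf) g))).comp
    ((LinearMap.quotKerEquivRange (lam π J)).symm.toLinearMap)

lemma psiQ_apply (hdil : IsMinimalStinespring Φ π J) (hΨ : IsCompletelyPositive Ψ)
    (hdom : IsCompletelyPositive (Φ - Ψ)) (g : (A × H) →₀ ℂ)
    (x : ↥(LinearMap.range (lam π J))) (f : (A × H) →₀ ℂ) (hf : (x : M) = lam π J f) :
    psiQ hdil hΨ hdom g x = Bfun Ψ g f := by
  have hx : (LinearMap.quotKerEquivRange (lam π J)) (Submodule.Quotient.mk f) = x := by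
    apply Subtype.ext
    rw [LinearMap.quotKerEquivRange_apply_mk, hf]
  rw [psiQ, LinearMap.comp_apply, LinearEquiv.coe_toLinearMap, ← hx,
    LinearEquiv.symm_apply_apply, Submodule.liftQ_apply]
  rfl

lemma psiQ_bound (hdil : IsMinimalStinespring Φ π J) (hΨ : IsCompletelyPositive Ψ)
    (hdom : IsCompletelyPositive (Φ - Ψ)) (g : (A × H) →₀ ℂ)
    (x : ↥(LinearMap.range (lam π J))) :
    ‖psiQ hdil hΨ hdom g x‖ ≤ ‖lam π J g‖ * ‖x‖ := by
  obtain ⟨f, hf⟩ := x.2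
  rw [psiQ_apply hdil hΨ hdom g x f hf.symm]
  have hx : ‖x‖ = ‖lam π J f‖ := by
    have : ‖x‖ = ‖(x : M)‖ := rfl
    rw [this, ← hf]
  rw [hx]
  exact Bfun_bound hdil hΨ hdom g f

/-- The functional `f ↦ Bfun Ψ g f` as a continuous functional on the range of `lam`. -/
def psiC (hdil : IsMinimalStinespring Φ π J) (hΨ : IsCompletelyPositive Ψ)
    (hdom : IsCompletelyPositive (Φ - Ψ)) (g : (A × H) →₀ ℂ) :
    ↥(LinearMap.range (lam π J)) →L[ℂ] ℂ :=
  (psiQ hdil hΨ hdom g).mkContinuous ‖lam π J g‖ (psiQ_bound hdil hΨ hdom g)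

/-- The continuous extension of `psiC` to all of `M`. -/
def psiE (hdil : IsMinimalStinespring Φ π J) (hΨ : IsCompletelyPositive Ψ)
    (hdom : IsCompletelyPositive (Φ - Ψ)) (g : (A × H) →₀ ℂ) : M →L[ℂ] ℂ :=
  (psiC hdil hΨ hdom g).extend (Submodule.subtypeL _)

lemma psiE_apply (hdil : IsMinimalStinespring Φ π J) (hΨ : IsCompletelyPositive Ψ)
    (hdom : IsCompletelyPositive (Φ - Ψ)) (g f : (A × H) →₀ ℂ) :
    psiE hdil hΨ hdom g (lam π J f) = Bfun Ψ g f := by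
  have h1 : lam π J f = (Submodule.subtypeL (LinearMap.range (lam π J)))
      ⟨lam π J f, LinearMap.mem_range_self _ f⟩ := rfl
  rw [h1, psiE, ContinuousLinearMap.extend_eq _ (dense_range_lam hdil).denseRange_val
    isUniformEmbedding_subtype_val.isUniformInducing]
  exact psiQ_apply hdil hΨ hdom g _ f rfl

lemma psiE_norm (hdil : IsMinimalStinespring Φ π J) (hΨ : IsCompletelyPositive Ψ)
    (hdom : IsCompletelyPositive (Φ - Ψ)) (g : (A × H) →₀ ℂ) :
    ‖psiE hdil hΨ hdom g‖ ≤ ‖lam π J g‖ := by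
  have h1 : ∀ x : ↥(LinearMap.range (lam π J)), ‖x‖ ≤ (1 : ℝ≥0) * ‖(Submodule.subtypeL
      (LinearMap.range (lam π J))) x‖ := by
    intro x; rw [NNReal.coe_one, one_mul]; rfl
  have h2 := ContinuousLinearMap.opNorm_extend_le (psiC hdil hΨ hdom g)
    (e := Submodule.subtypeL (LinearMap.range (lam π J)))
    (dense_range_lam hdil).denseRange_val h1
  calc ‖psiE hdil hΨ hdom g‖ ≤ (1:ℝ≥0) * ‖psiC hdil hΨ hdom g‖ := h2
  _ = ‖psiC hdil hΨ hdom g‖ := by rw [NNReal.coe_one, one_mul]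
  _ ≤ ‖lam π J g‖ := LinearMap.mkContinuous_norm_le _ (norm_nonneg _) _

end ArvAux

namespace ArvAux

set_option linter.unusedSectionVars false
set_option maxHeartbeats 1000000

open ContinuousLinearMap
open scoped NNReal

variable {A : Type*} [CStarAlgebra A]
  {H M : Type*} [NormedAddCommGroup H] [InnerProductSpace ℂ H] [CompleteSpace H]
  [NormedAddCommGroup M] [InnerProductSpace ℂ M] [CompleteSpace M]
  {Φ Ψ : A →ₗ[ℂ] H →L[ℂ] H} {π : A →⋆ₐ[ℂ] (M →L[ℂ] M)} {J : H →L[ℂ] M}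

/-- The vector representing the functional `psiE`. -/
def tau (hdil : IsMinimalStinespring Φ π J) (hΨ : IsCompletelyPositive Ψ)
    (hdom : IsCompletelyPositive (Φ - Ψ)) (g : (A × H) →₀ ℂ) : M :=
  (InnerProductSpace.toDual ℂ M).symm (psiE hdil hΨ hdom g)

lemma tau_inner (hdil : IsMinimalStinespring Φ π J) (hΨ : IsCompletelyPositive Ψ)
    (hdom : IsCompletelyPositive (Φ - Ψ)) (g f : (A × H) →₀ ℂ) :
    ⟪tau hdil hΨ hdom g, lam π J f⟫ = Bfun Ψ g f := by
  rw [tau, InnerProductSpace.toDual_symm_apply]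
  exact psiE_apply hdil hΨ hdom g f

lemma tau_norm (hdil : IsMinimalStinespring Φ π J) (hΨ : IsCompletelyPositive Ψ)
    (hdom : IsCompletelyPositive (Φ - Ψ)) (g : (A × H) →₀ ℂ) :
    ‖tau hdil hΨ hdom g‖ ≤ ‖lam π J g‖ := by
  rw [tau, LinearIsometryEquiv.norm_map]
  exact psiE_norm hdil hΨ hdom g

/-- `tau` as a linear map. -/
def tauL (hdil : IsMinimalStinespring Φ π J) (hΨ : IsCompletelyPositive Ψ)
    (hdom : IsCompletelyPositive (Φ - Ψ)) : ((A × H) →₀ ℂ) →ₗ[ℂ] M where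
  toFun := tau hdil hΨ hdom
  map_add' g g' := by
    refine (dense_range_lam hdil).eq_of_inner_left ℂ fun v hv => ?_
    obtain ⟨f, hf⟩ := hv
    have h1 : (v : M) = lam π J f := hf.symm
    rw [h1, tau_inner, inner_add_left, tau_inner, tau_inner, Bfun_add_left]
  map_smul' c g := by
    refine (dense_range_lam hdil).eq_of_inner_left ℂ fun v hv => ?_
    obtain ⟨f, hf⟩ := hv
    have h1 : (v : M) = lam π J f := hf.symm
    rw [h1, tau_inner, RingHom.id_apply, inner_smul_left, tau_inner, Bfun_smul_left]

/-- The Radon–Nikodym operator on the range of `lam`. -/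
def T0 (hdil : IsMinimalStinespring Φ π J) (hΨ : IsCompletelyPositive Ψ)
    (hdom : IsCompletelyPositive (Φ - Ψ)) : ↥(LinearMap.range (lam π J)) →ₗ[ℂ] M :=
  (Submodule.liftQ (LinearMap.ker (lam π J)) (tauL hdil hΨ hdom)
    (fun g hg => LinearMap.mem_ker.2 <| by
      have hg' : lam π J g = 0 := LinearMap.mem_ker.1 hg
      refine (dense_range_lam hdil).eq_zero_of_inner_left ℂ fun v hv => ?_
      obtain ⟨f, hf⟩ := hv
      have h1 : (v : M) = lam π J f := hf.symm
      show ⟪tau hdil hΨ hdom g, (v : M)⟫ = 0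
      rw [h1, tau_inner]
      exact Bfun_ker_left hdil hΨ hdom hg' f)).comp
    ((LinearMap.quotKerEquivRange (lam π J)).symm.toLinearMap)

lemma T0_apply (hdil : IsMinimalStinespring Φ π J) (hΨ : IsCompletelyPositive Ψ)
    (hdom : IsCompletelyPositive (Φ - Ψ))
    (x : ↥(LinearMap.range (lam π J))) (f : (A × H) →₀ ℂ) (hf : (x : M) = lam π J f) :
    T0 hdil hΨ hdom x = tau hdil hΨ hdom f := by
  have hx : (LinearMap.quotKerEquivRange (lam π J)) (Submodule.Quotient.mk f) = x := by
    apply Subtype.ext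
    rw [LinearMap.quotKerEquivRange_apply_mk, hf]
  rw [T0, LinearMap.comp_apply, LinearEquiv.coe_toLinearMap, ← hx,
    LinearEquiv.symm_apply_apply, Submodule.liftQ_apply]
  rfl

lemma T0_bound (hdil : IsMinimalStinespring Φ π J) (hΨ : IsCompletelyPositive Ψ)
    (hdom : IsCompletelyPositive (Φ - Ψ)) (x : ↥(LinearMap.range (lam π J))) :
    ‖T0 hdil hΨ hdom x‖ ≤ 1 * ‖x‖ := by
  obtain ⟨f, hf⟩ := x.2
  rw [one_mul, T0_apply hdil hΨ hdom x f hf.symm]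
  have hx : ‖x‖ = ‖lam π J f‖ := by
    have : ‖x‖ = ‖(x : M)‖ := rfl
    rw [this, ← hf]
  rw [hx]
  exact tau_norm hdil hΨ hdom f

/-- The Radon–Nikodym operator `T` on `M`. -/
def Top (hdil : IsMinimalStinespring Φ π J) (hΨ : IsCompletelyPositive Ψ)
    (hdom : IsCompletelyPositive (Φ - Ψ)) : M →L[ℂ] M :=
  ((T0 hdil hΨ hdom).mkContinuous 1 (T0_bound hdil hΨ hdom)).extend
    (Submodule.subtypeL _)

lemma Top_apply (hdil : IsMinimalStinespring Φ π J) (hΨ : IsCompletelyPositive Ψ)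
    (hdom : IsCompletelyPositive (Φ - Ψ)) (f : (A × H) →₀ ℂ) :
    Top hdil hΨ hdom (lam π J f) = tau hdil hΨ hdom f := by
  have h1 : lam π J f = (Submodule.subtypeL (LinearMap.range (lam π J)))
      ⟨lam π J f, LinearMap.mem_range_self _ f⟩ := rfl
  rw [h1, Top, ContinuousLinearMap.extend_eq _ (dense_range_lam hdil).denseRange_val
    isUniformEmbedding_subtype_val.isUniformInducing]
  exact T0_apply hdil hΨ hdom _ f rfl

lemma Top_matrix (hdil : IsMinimalStinespring Φ π J) (hΨ : IsCompletelyPositive Ψ)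
    (hdom : IsCompletelyPositive (Φ - Ψ)) (f g : (A × H) →₀ ℂ) :
    ⟪lam π J f, Top hdil hΨ hdom (lam π J g)⟫ = Bfun Ψ f g := by
  rw [Top_apply, ← inner_conj_symm, tau_inner, Bfun_conj_symm hΨ]

lemma lam_single (p : A × H) : lam π J (Finsupp.single p 1) = gen π J p := by
  rw [lam, Finsupp.linearCombination_single, one_smul]

lemma Bfun_single (Ψ : A →ₗ[ℂ] H →L[ℂ] H) (p q : A × H) :
    Bfun Ψ (Finsupp.single p 1) (Finsupp.single q 1) = ⟪p.2, Ψ (star p.1 * q.1) q.2⟫ := by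
  classical
  rw [Bfun, Finsupp.support_single_ne_zero p one_ne_zero,
    Finsupp.support_single_ne_zero q one_ne_zero, Finset.sum_singleton,
    Finset.sum_singleton, Finsupp.single_eq_same, Finsupp.single_eq_same, one_smul, one_smul]

lemma Top_gen (hdil : IsMinimalStinespring Φ π J) (hΨ : IsCompletelyPositive Ψ)
    (hdom : IsCompletelyPositive (Φ - Ψ)) (p q : A × H) :
    ⟪gen π J p, Top hdil hΨ hdom (gen π J q)⟫ = ⟪p.2, Ψ (star p.1 * q.1) q.2⟫ := by
  rw [← lam_single, ← lam_single, Top_matrix, Bfun_single]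

end ArvAux

namespace ArvAux

set_option linter.unusedSectionVars false
set_option maxHeartbeats 1000000

open ContinuousLinearMap
open scoped NNReal

variable {A : Type*} [CStarAlgebra A]
  {H M : Type*} [NormedAddCommGroup H] [InnerProductSpace ℂ H] [CompleteSpace H]
  [NormedAddCommGroup M] [InnerProductSpace ℂ M] [CompleteSpace M]
  {Φ Ψ : A →ₗ[ℂ] H →L[ℂ] H} {π : A →⋆ₐ[ℂ] (M →L[ℂ] M)} {J : H →L[ℂ] M}

/-- Two vectors with equal inner products against all generators are equal. -/
lemma eq_of_gen_inner (hdil : IsMinimalStinespring Φ π J) {u u' : M}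
    (h : ∀ p : A × H, ⟪gen π J p, u⟫ = ⟪gen π J p, u'⟫) : u = u' := by
  refine Dense.eq_of_inner_right (𝕜 := ℂ)
    (S := Submodule.span ℂ {m : M | ∃ (a : A) (v : H), m = π a (J v)}) hdil.minimal
    fun x hx => ?_
  refine Submodule.span_induction (p := fun x _ => ⟪x, u⟫ = ⟪x, u'⟫) ?_ ?_ ?_ ?_ hx
  · rintro x ⟨a, w, rfl⟩
    exact h (a, w)
  · simp
  · intro x y _ _ hx hy
    simp only [inner_add_left, hx, hy]
  · intro c x _ hx
    simp only [inner_smul_left, hx]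

/-- An operator vanishing on all matrix elements of generators is zero. -/
lemma clm_eq_zero_of_gen (hdil : IsMinimalStinespring Φ π J) {E : M →L[ℂ] M}
    (h : ∀ p q : A × H, ⟪gen π J p, E (gen π J q)⟫ = 0) : E = 0 := by
  have hgen : ∀ q : A × H, E (gen π J q) = 0 := by
    intro q
    refine eq_of_gen_inner hdil fun p => ?_
    rw [h p q, inner_zero_right]
  have hspan : ∀ x ∈ Submodule.span ℂ {m : M | ∃ (a : A) (v : H), m = π a (J v)},
      E x = 0 := by
    intro x hx
    refine Submodule.span_induction (p := fun x _ => E x = 0) ?_ (by simp) ?_ ?_ hx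
    · rintro x ⟨a, w, rfl⟩
      exact hgen (a, w)
    · intro x y _ _ hx hy
      simp only [map_add, hx, hy, add_zero]
    · intro c x _ hx
      simp only [map_smul, hx, smul_zero]
  have : (E : M → M) = (0 : M →L[ℂ] M) := by
    refine Continuous.ext_on hdil.minimal E.continuous continuous_zero fun x hx => hspan x hx
  ext x
  exact congrFun this x

/-- Two operators agreeing on all generator matrix elements are equal. -/
lemma clm_eq_of_gen (hdil : IsMinimalStinespring Φ π J) {E E' : M →L[ℂ] M}
    (h : ∀ p q : A × H, ⟪gen π J p, E (gen π J q)⟫ = ⟪gen π J p, E' (gen π J q)⟫) :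
    E = E' := by
  have : E - E' = 0 := by
    refine clm_eq_zero_of_gen hdil fun p q => ?_
    rw [ContinuousLinearMap.sub_apply, inner_sub_right, h p q, sub_self]
  rw [← sub_eq_zero]; exact this

lemma pi_apply_gen (π : A →⋆ₐ[ℂ] (M →L[ℂ] M)) (J : H →L[ℂ] M) (c : A) (p : A × H) :
    π c (gen π J p) = gen π J (c * p.1, p.2) := by
  rw [gen, gen, map_mul, ContinuousLinearMap.mul_apply]

lemma adjoint_pi_gen (π : A →⋆ₐ[ℂ] (M →L[ℂ] M)) (J : H →L[ℂ] M) (c : A) (p : A × H) :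
    ContinuousLinearMap.adjoint (π c) (gen π J p) = gen π J (star c * p.1, p.2) := by
  rw [← ContinuousLinearMap.star_eq_adjoint, ← map_star, pi_apply_gen]

lemma Top_comm (hdil : IsMinimalStinespring Φ π J) (hΨ : IsCompletelyPositive Ψ)
    (hdom : IsCompletelyPositive (Φ - Ψ)) (c : A) :
    Commute (Top hdil hΨ hdom) (π c) := by
  have key : ∀ q : A × H, Top hdil hΨ hdom (π c (gen π J q))
      = π c (Top hdil hΨ hdom (gen π J q)) := by
    intro q
    refine eq_of_gen_inner hdil fun p => ?_
    rw [pi_apply_gen, Top_gen, ← ContinuousLinearMap.adjoint_inner_left (π c),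
      adjoint_pi_gen, Top_gen]
    show ⟪p.2, Ψ (star p.1 * (c * q.1)) q.2⟫ = ⟪p.2, Ψ (star (star c * p.1) * q.1) q.2⟫
    rw [star_mul, star_star, mul_assoc]
  have hspan : ∀ x ∈ Submodule.span ℂ {m : M | ∃ (a : A) (v : H), m = π a (J v)},
      Top hdil hΨ hdom (π c x) = π c (Top hdil hΨ hdom x) := by
    intro x hx
    refine Submodule.span_induction
      (p := fun x _ => Top hdil hΨ hdom (π c x) = π c (Top hdil hΨ hdom x)) ?_ ?_ ?_ ?_ hx
    · rintro x ⟨a, w, rfl⟩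
      exact key (a, w)
    · simp
    · intro x y _ _ hx hy
      simp only [map_add, hx, hy]
    · intro r x _ hx
      simp only [map_smul, hx]
  have hfun : (fun x => Top hdil hΨ hdom (π c x)) = fun x => π c (Top hdil hΨ hdom x) := by
    refine Continuous.ext_on hdil.minimal ?_ ?_ fun x hx => hspan x hx
    · exact (Top hdil hΨ hdom).continuous.comp (π c).continuous
    · exact (π c).continuous.comp (Top hdil hΨ hdom).continuous
  ext x
  exact congrFun hfun x

lemma Top_compress (hdil : IsMinimalStinespring Φ π J) (hΨ : IsCompletelyPositive Ψ)
    (hdom : IsCompletelyPositive (Φ - Ψ)) (a : A) :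
    Ψ a = ContinuousLinearMap.adjoint J ∘L (Top hdil hΨ hdom ∘L (π a ∘L J)) := by
  ext w
  refine ext_inner_left ℂ fun v => ?_
  have hJ : J v = gen π J (1, v) := by
    rw [gen, map_one, ContinuousLinearMap.one_apply]
  calc ⟪v, Ψ a w⟫ = ⟪v, Ψ (star (1:A) * a) w⟫ := by rw [star_one, one_mul]
  _ = ⟪gen π J (1, v), Top hdil hΨ hdom (gen π J (a, w))⟫ := (Top_gen hdil hΨ hdom (1, v) (a, w)).symm
  _ = ⟪J v, Top hdil hΨ hdom (π a (J w))⟫ := by rw [hJ]; rfl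
  _ = _ := by
    rw [ContinuousLinearMap.comp_apply, ContinuousLinearMap.comp_apply,
      ContinuousLinearMap.comp_apply, ContinuousLinearMap.adjoint_inner_right]

/-- Radon–Nikodym: every CP map dominated by `Φ` is compressed from an operator in the
commutant of `π`. -/
lemma exists_T (hdil : IsMinimalStinespring Φ π J) (hΨ : IsCompletelyPositive Ψ)
    (hdom : IsCompletelyPositive (Φ - Ψ)) :
    ∃ T : M →L[ℂ] M, (∀ c : A, Commute T (π c)) ∧
      (∀ a : A, Ψ a = ContinuousLinearMap.adjoint J ∘L (T ∘L (π a ∘L J))) :=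
  ⟨Top hdil hΨ hdom, Top_comm hdil hΨ hdom, Top_compress hdil hΨ hdom⟩

end ArvAux

namespace ArvAux

set_option linter.unusedSectionVars false
set_option maxHeartbeats 1000000

open ContinuousLinearMap
open scoped NNReal

variable {A : Type*} [CStarAlgebra A]
  {H M : Type*} [NormedAddCommGroup H] [InnerProductSpace ℂ H] [CompleteSpace H]
  [NormedAddCommGroup M] [InnerProductSpace ℂ M] [CompleteSpace M]
  {Φ : A →ₗ[ℂ] H →L[ℂ] H} {π : A →⋆ₐ[ℂ] (M →L[ℂ] M)} {J : H →L[ℂ] M}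

/-- Compression of an operator `C` on `M` through the dilation data. -/
def comprMap (π : A →⋆ₐ[ℂ] (M →L[ℂ] M)) (J : H →L[ℂ] M) (C : M →L[ℂ] M) :
    A →ₗ[ℂ] (H →L[ℂ] H) where
  toFun a := ContinuousLinearMap.adjoint J ∘L (C ∘L ((π a) ∘L J))
  map_add' a b := by
    simp only [map_add, ContinuousLinearMap.add_comp, ContinuousLinearMap.comp_add]
  map_smul' c a := by
    simp only [map_smul, RingHom.id_apply, ContinuousLinearMap.smul_comp,
      ContinuousLinearMap.comp_smul]

lemma comprMap_apply (C : M →L[ℂ] M) (a : A) :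
    comprMap π J C a = ContinuousLinearMap.adjoint J ∘L (C ∘L ((π a) ∘L J)) := rfl

lemma comprMap_cp {C : M →L[ℂ] M} (hC : ∀ m : M, 0 ≤ ⟪m, C m⟫)
    (hcomm : ∀ a : A, Commute C (π a)) :
    IsCompletelyPositive (comprMap π J C) := by
  intro n a v
  have term : ∀ j k, ⟪v j, comprMap π J C (star (a j) * a k) (v k)⟫
      = ⟪π (a j) (J (v j)), C (π (a k) (J (v k)))⟫ := by
    intro j k
    rw [comprMap_apply, ContinuousLinearMap.comp_apply, ContinuousLinearMap.comp_apply,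
      ContinuousLinearMap.comp_apply, ContinuousLinearMap.adjoint_inner_right, map_mul,
      ContinuousLinearMap.mul_apply, ← ContinuousLinearMap.mul_apply C,
      hcomm (star (a j)), ContinuousLinearMap.mul_apply, map_star,
      ContinuousLinearMap.star_eq_adjoint, ContinuousLinearMap.adjoint_inner_right]
  calc (0:ℂ) ≤ ⟪∑ k, π (a k) (J (v k)), C (∑ k, π (a k) (J (v k)))⟫ := hC _
  _ = ∑ j, ∑ k, ⟪v j, comprMap π J C (star (a j) * a k) (v k)⟫ := by
      rw [map_sum, sum_inner]
      refine Finset.sum_congr rfl fun j _ => ?_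
      rw [inner_sum]
      refine Finset.sum_congr rfl fun k _ => ?_
      rw [term]

lemma inner_self_complex (m : M) : ⟪m, m⟫ = ((‖m‖ ^ 2 : ℝ) : ℂ) := by
  rw [inner_self_eq_norm_sq_to_K]
  norm_cast

/-- For a selfadjoint `E` and small real `r`, `1 + r • E` is a positive operator. -/
lemma one_add_smul_pos {E : M →L[ℂ] M} (hE : IsSelfAdjoint E) {r : ℝ}
    (hr : ‖E‖ * |r| ≤ 1) (m : M) :
    0 ≤ ⟪m, ((1 : M →L[ℂ] M) + (r : ℂ) • E) m⟫ := by
  have hsa : ⟪E m, m⟫ = ⟪m, E m⟫ := by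
    rw [← ContinuousLinearMap.adjoint_inner_left, hE.adjoint_eq]
  have him : (⟪m, E m⟫).im = 0 := by
    have h1 : (starRingEnd ℂ) ⟪m, E m⟫ = ⟪m, E m⟫ := by
      rw [inner_conj_symm, hsa]
    exact Complex.conj_eq_iff_im.1 h1
  have hre : |(⟪m, E m⟫).re| ≤ ‖E‖ * ‖m‖ ^ 2 := by
    calc |(⟪m, E m⟫).re| ≤ ‖⟪m, E m⟫‖ := Complex.abs_re_le_norm _
    _ ≤ ‖m‖ * ‖E m‖ := norm_inner_le_norm m (E m)
    _ ≤ ‖m‖ * (‖E‖ * ‖m‖) := by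
        have := E.le_opNorm m
        exact mul_le_mul_of_nonneg_left this (norm_nonneg m)
    _ = ‖E‖ * ‖m‖ ^ 2 := by ring
  rw [ContinuousLinearMap.add_apply, ContinuousLinearMap.one_apply,
    ContinuousLinearMap.smul_apply, inner_add_right, inner_smul_right, inner_self_complex]
  rw [Complex.nonneg_iff]
  constructor
  · simp only [Complex.add_re, Complex.ofReal_re, Complex.mul_re, Complex.ofReal_im,
      zero_mul, sub_zero]
    have h2 : |r * (⟪m, E m⟫).re| ≤ ‖m‖ ^ 2 := by
      rw [abs_mul]
      calc |r| * |(⟪m, E m⟫).re| ≤ |r| * (‖E‖ * ‖m‖ ^ 2) :=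
        mul_le_mul_of_nonneg_left hre (abs_nonneg r)
      _ = (‖E‖ * |r|) * ‖m‖ ^ 2 := by ring
      _ ≤ 1 * ‖m‖ ^ 2 := mul_le_mul_of_nonneg_right hr (by positivity)
      _ = ‖m‖ ^ 2 := one_mul _
    have h3 := neg_abs_le (r * (⟪m, E m⟫).re)
    linarith
  · simp only [Complex.add_im, Complex.ofReal_im, Complex.mul_im, Complex.ofReal_re,
      Complex.ofReal_im, him, mul_zero, zero_mul, add_zero, zero_add]

lemma cp_smul {Φ₁ : A →ₗ[ℂ] H →L[ℂ] H} (hΦ₁ : IsCompletelyPositive Φ₁) {t : ℝ}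
    (ht : 0 ≤ t) : IsCompletelyPositive ((t : ℂ) • Φ₁) := by
  intro n a v
  have h := hΦ₁ n a v
  have h0 : (0:ℂ) ≤ (t : ℂ) := by
    rw [Complex.nonneg_iff]
    constructor
    · simpa using ht
    · simp
  calc (0:ℂ) ≤ (t:ℂ) * ∑ j, ∑ k, ⟪v j, Φ₁ (star (a j) * a k) (v k)⟫ := mul_nonneg h0 h
  _ = _ := by
      rw [Finset.mul_sum]
      refine Finset.sum_congr rfl fun j _ => ?_
      rw [Finset.mul_sum]
      refine Finset.sum_congr rfl fun k _ => ?_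
      rw [LinearMap.smul_apply, ContinuousLinearMap.smul_apply, inner_smul_right]

end ArvAux

set_option maxHeartbeats 2000000 in
open ContinuousLinearMap ArvAux in
/-- **Arveson's extremality criterion** (Theorem 3 of the paper). Let `Φ ∈ CP_P(A;H)`
have minimal Stinespring dilation `(M, π, J)`. Then `Φ` is extremal in `CP_P(A;H)` if and
only if every `E ∈ L(M)` commuting with the range of `π` and satisfying `J⋆ E J = 0`
vanishes. -/
theorem cp_extremal_iff
    {A : Type*} [CStarAlgebra A]
    {H M : Type*} [NormedAddCommGroup H] [InnerProductSpace ℂ H] [CompleteSpace H]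
    [NormedAddCommGroup M] [InnerProductSpace ℂ M] [CompleteSpace M]
    (P : H →L[ℂ] H) (hP : P.IsPositive)
    (Φ : A →ₗ[ℂ] H →L[ℂ] H) (hΦ : Φ ∈ CPWithUnit A H P)
    (π : A →⋆ₐ[ℂ] (M →L[ℂ] M)) (J : H →L[ℂ] M)
    (hdil : IsMinimalStinespring Φ π J) :
    IsExtremalIn (CPWithUnit A H P) Φ ↔
      ∀ E : M →L[ℂ] M, (∀ a : A, Commute E (π a)) →
        (ContinuousLinearMap.adjoint J) ∘L E ∘L J = 0 → E = 0 := by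
  classical
  obtain ⟨hΦcp, hΦ1⟩ := hΦ
  have hJJ : ContinuousLinearMap.adjoint J ∘L J = P := by
    have h := hdil.dilation 1
    rw [map_one π, ContinuousLinearMap.one_def, ContinuousLinearMap.id_comp, hΦ1] at h
    exact h.symm
  constructor
  · -- extremal → criterion
    intro hext E hcommE hJEJ
    have key : ∀ E' : M →L[ℂ] M, IsSelfAdjoint E' → (∀ a : A, Commute E' (π a)) →
        (ContinuousLinearMap.adjoint J) ∘L E' ∘L J = 0 → E' = 0 := by
      intro E' hsa hcomm hJE
      by_cases hE0 : E' = 0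
      · exact hE0
      have hnorm : 0 < ‖E'‖ := norm_pos_iff.2 hE0
      set r : ℝ := ‖E'‖⁻¹ with hrdef
      have hrpos : 0 < r := inv_pos.2 hnorm
      have hr : ‖E'‖ * |r| ≤ 1 := by
        rw [abs_of_pos hrpos, hrdef, mul_inv_cancel₀ (ne_of_gt hnorm)]
      have hrneg : ‖E'‖ * |(-r)| ≤ 1 := by rwa [abs_neg]
      have hJE' : ∀ w, ContinuousLinearMap.adjoint J (E' (J w)) = 0 := by
        intro w
        have h := ContinuousLinearMap.ext_iff.1 hJE w
        simpa [ContinuousLinearMap.comp_apply] using h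
      set CPo : M →L[ℂ] M := (1 : M →L[ℂ] M) + (r : ℂ) • E' with hCP
      set CNo : M →L[ℂ] M := (1 : M →L[ℂ] M) + ((-r : ℝ) : ℂ) • E' with hCN
      have hposP : ∀ m, 0 ≤ ⟪m, CPo m⟫ := one_add_smul_pos hsa hr
      have hposN : ∀ m, 0 ≤ ⟪m, CNo m⟫ := one_add_smul_pos hsa hrneg
      have hcommP : ∀ a : A, Commute CPo (π a) := fun a =>
        (Commute.one_left (π a)).add_left ((hcomm a).smul_left _)
      have hcommN : ∀ a : A, Commute CNo (π a) := fun a =>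
        (Commute.one_left (π a)).add_left ((hcomm a).smul_left _)
      have hunit : ∀ (c : ℂ), comprMap π J ((1 : M →L[ℂ] M) + c • E') 1 = P := by
        intro c
        ext w
        rw [comprMap_apply, ContinuousLinearMap.comp_apply, ContinuousLinearMap.comp_apply,
          ContinuousLinearMap.comp_apply, map_one π, ContinuousLinearMap.one_apply,
          ContinuousLinearMap.add_apply, ContinuousLinearMap.one_apply,
          ContinuousLinearMap.smul_apply, map_add, map_smul, hJE' w, smul_zero, add_zero,
          ← hJJ, ContinuousLinearMap.comp_apply]
      have hmemP : comprMap π J CPo ∈ CPWithUnit A H P :=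
        ⟨comprMap_cp hposP hcommP, hunit (r : ℂ)⟩
      have hmemN : comprMap π J CNo ∈ CPWithUnit A H P :=
        ⟨comprMap_cp hposN hcommN, hunit ((-r : ℝ) : ℂ)⟩
      have hconv : Φ = ((1/2 : ℝ) : ℂ) • comprMap π J CPo
          + ((1 - 1/2 : ℝ) : ℂ) • comprMap π J CNo := by
        apply LinearMap.ext; intro a
        apply ContinuousLinearMap.ext; intro w
        rw [hdil.dilation a]
        simp only [LinearMap.add_apply, LinearMap.smul_apply, comprMap_apply, hCP, hCN,
          ContinuousLinearMap.comp_apply, ContinuousLinearMap.add_apply,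
          ContinuousLinearMap.smul_apply, ContinuousLinearMap.one_apply,
          ContinuousLinearMap.coe_smul', Pi.smul_apply, map_add, map_smul]
        push_cast
        module
      have heq := hext.2 _ hmemP _ hmemN (1/2) (by norm_num) (by norm_num) hconv
      have hzero : ∀ a : A, ∀ w : H,
          ContinuousLinearMap.adjoint J (E' (π a (J w))) = 0 := by
        intro a w
        have h1 : comprMap π J CPo a w = comprMap π J CNo a w := by rw [heq]
        simp only [comprMap_apply, ContinuousLinearMap.comp_apply, hCP, hCN,
          ContinuousLinearMap.add_apply, ContinuousLinearMap.one_apply,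
          ContinuousLinearMap.smul_apply, map_add, map_smul] at h1
        have h2 := add_left_cancel h1
        set u := ContinuousLinearMap.adjoint J (E' (π a (J w))) with hu
        have h3 : ((r : ℂ) - ((-r : ℝ) : ℂ)) • u = 0 := by
          rw [sub_smul, h2, sub_self]
        have h4 : ((r : ℂ) - ((-r : ℝ) : ℂ)) ≠ 0 := by
          push_cast
          intro hc
          have : (2 * r : ℂ) = 0 := by rw [← hc]; ring
          have : (2 * r : ℝ) = 0 := by exact_mod_cast this
          linarith
        have h5 := congrArg (fun x => ((r : ℂ) - ((-r : ℝ) : ℂ))⁻¹ • x) h3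
        simp only [smul_smul, inv_mul_cancel₀ h4, one_smul, smul_zero] at h5
        exact h5
      refine clm_eq_zero_of_gen hdil fun p q => ?_
      have e1 : π p.1 = ContinuousLinearMap.adjoint (π (star p.1)) := by
        rw [← ContinuousLinearMap.star_eq_adjoint, ← map_star, star_star]
      have e2 : π (star p.1) (E' (π q.1 (J q.2)))
          = E' (π (star p.1 * q.1) (J q.2)) := by
        rw [← ContinuousLinearMap.mul_apply (π (star p.1)) E',
          ← (hcomm (star p.1)).eq, ContinuousLinearMap.mul_apply,
          ← ContinuousLinearMap.mul_apply (π (star p.1)) (π q.1), ← map_mul]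
      rw [gen, gen, e1, ContinuousLinearMap.adjoint_inner_left, e2,
        ← ContinuousLinearMap.adjoint_inner_right J, hzero (star p.1 * q.1) q.2,
        inner_zero_right]
    -- reduce the general case to the selfadjoint one
    have hcommstar : ∀ a : A, Commute (star E) (π a) := by
      intro a
      have h := (hcommE (star a)).star_star
      rw [map_star, star_star] at h
      exact h
    have hstarJ : ContinuousLinearMap.adjoint J ∘L star E ∘L J = 0 := by
      have h := congrArg ContinuousLinearMap.adjoint hJEJ
      rw [ContinuousLinearMap.adjoint_comp, ContinuousLinearMap.adjoint_comp,
        ContinuousLinearMap.adjoint_adjoint] at h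
      rw [ContinuousLinearMap.star_eq_adjoint]
      calc ContinuousLinearMap.adjoint J ∘L ContinuousLinearMap.adjoint E ∘L J
          = (ContinuousLinearMap.adjoint J ∘L ContinuousLinearMap.adjoint E) ∘L J := by
            rw [ContinuousLinearMap.comp_assoc]
      _ = 0 := by rw [h, map_zero]
    have h1 : star E + E = 0 := by
      refine key _ ?_ (fun a => (hcommstar a).add_left (hcommE a)) ?_
      · show star (star E + E) = star E + E
        rw [star_add, star_star, add_comm]
      · rw [ContinuousLinearMap.add_comp, ContinuousLinearMap.comp_add]
        have hJ1 : ContinuousLinearMap.adjoint J ∘L star E ∘L J = 0 := hstarJ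
        rw [hJ1, hJEJ, add_zero]
    have h2 : E - star E = 0 := by
      have h2' : Complex.I • (E - star E) = 0 := by
        refine key _ ?_ (fun a => (((hcommE a).sub_left (hcommstar a)).smul_left _)) ?_
        · show star (Complex.I • (E - star E)) = Complex.I • (E - star E)
          rw [star_smul, star_sub, star_star, Complex.star_def, Complex.conj_I,
            neg_smul, ← smul_neg, neg_sub]
        · rw [ContinuousLinearMap.smul_comp, ContinuousLinearMap.comp_smul,
            ContinuousLinearMap.sub_comp, ContinuousLinearMap.comp_sub, hJEJ, hstarJ,
            sub_self, smul_zero]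
      have h2'' := congrArg (fun x => (Complex.I)⁻¹ • x) h2'
      simp only [smul_smul, inv_mul_cancel₀ Complex.I_ne_zero, one_smul, smul_zero] at h2''
      exact h2''
    have hstarE : star E = E := by
      have := sub_eq_zero.1 h2
      exact this.symm
    rw [hstarE] at h1
    have h1' : (2 : ℂ) • E = 0 := by rw [two_smul]; exact h1
    have h1'' := congrArg (fun x => ((2 : ℂ))⁻¹ • x) h1'
    simp only [smul_smul, inv_mul_cancel₀ (two_ne_zero (α := ℂ)), one_smul, smul_zero] at h1''
    exact h1''
  · -- criterion → extremal
    intro hcrit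
    refine ⟨⟨hΦcp, hΦ1⟩, ?_⟩
    intro Φ₁ hΦ₁ Φ₂ hΦ₂ t ht0 ht1 hconv
    have hΨcp : IsCompletelyPositive ((t : ℂ) • Φ₁) := cp_smul hΦ₁.1 (le_of_lt ht0)
    have hsub : Φ - (t : ℂ) • Φ₁ = ((1 - t : ℝ) : ℂ) • Φ₂ := by
      rw [hconv, add_sub_cancel_left]
    have hdom : IsCompletelyPositive (Φ - (t : ℂ) • Φ₁) := by
      rw [hsub]; exact cp_smul hΦ₂.1 (by linarith)
    obtain ⟨T, hTcomm, hTcompr⟩ := exists_T hdil hΨcp hdom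
    set E := T - (t : ℂ) • (1 : M →L[ℂ] M) with hE
    have hEcomm : ∀ a : A, Commute E (π a) := fun a =>
      (hTcomm a).sub_left ((Commute.one_left (π a)).smul_left _)
    have hT1 : ContinuousLinearMap.adjoint J ∘L (T ∘L J) = (t : ℂ) • P := by
      have h := hTcompr 1
      rw [map_one π, ContinuousLinearMap.one_def, ContinuousLinearMap.id_comp] at h
      rw [← h, LinearMap.smul_apply, hΦ₁.2]
    have hEJ : ContinuousLinearMap.adjoint J ∘L E ∘L J = 0 := by
      rw [hE, ContinuousLinearMap.sub_comp, ContinuousLinearMap.comp_sub,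
        ContinuousLinearMap.smul_comp, ContinuousLinearMap.one_def,
        ContinuousLinearMap.id_comp, ContinuousLinearMap.comp_smul, hT1, hJJ,
        sub_self]
    have hE0 : E = 0 := hcrit E hEcomm hEJ
    have hTt : T = (t : ℂ) • (1 : M →L[ℂ] M) := by rwa [sub_eq_zero] at hE0
    have ht' : (t : ℂ) ≠ 0 := by
      simp only [ne_eq, Complex.ofReal_eq_zero]
      exact ne_of_gt ht0
    have hΦ₁Φ : Φ₁ = Φ := by
      have hψ : (t : ℂ) • Φ₁ = (t : ℂ) • Φ := by
        apply LinearMap.ext; intro a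
        rw [hTcompr a, hTt, LinearMap.smul_apply, ContinuousLinearMap.smul_comp,
          ContinuousLinearMap.one_def, ContinuousLinearMap.id_comp,
          ContinuousLinearMap.comp_smul, ← hdil.dilation a]
      exact smul_right_injective _ ht' hψ
    have ht1' : ((1 - t : ℝ) : ℂ) ≠ 0 := by
      simp only [ne_eq, Complex.ofReal_eq_zero]
      intro hc; linarith
    have hΦ₂Φ : Φ₂ = Φ := by
      have h2 : ((1 - t : ℝ) : ℂ) • Φ₂ = ((1 - t : ℝ) : ℂ) • Φ := by
        rw [← hsub, hΦ₁Φ]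
        push_cast
        module
      exact smul_right_injective _ ht1' h2
    rw [hΦ₁Φ, hΦ₂Φ]
end
end

section
/- Let A and B be von Neumann algebras, H a complex Hilbert space, P ∈ L(H) positive, and suppose Φ₁ ∈ CP_P(A;H) and Φ₂ ∈ CP_P(B;H) are compatible, i.e. there exists Ψ ∈ CP_P(A ⊗ B; H) with Ψ(a ⊗ 1_B) = Φ₁(a) and Ψ(1_A ⊗ b) = Φ₂(b) for all a ∈ A, b ∈ B. If Φ₁ is extremal in CP_P(A;H) or Φ₂ is extremal in CP_P(B;H), then the joint map Ψ is unique: any Ψ' ∈ CP_P(A ⊗ B; H) with the same marginals equals Ψ. -/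
open scoped ComplexOrder ComplexInnerProductSpace Topology

noncomputable section

/-- `C`, together with the bilinear map `tmul`, is a tensor product of the algebras
`A` and `B`: `tmul` is multiplicative (`(a ⊗ b)(a' ⊗ b') = aa' ⊗ bb'`), star-preserving,
unital, and the span of the elementary tensors is dense in `C`. -/
structure IsTensorProductOfAlgebras (A B C : Type*)
    [CStarAlgebra A] [CStarAlgebra B] [CStarAlgebra C]
    (tmul : A →ₗ[ℂ] B →ₗ[ℂ] C) : Prop where
  tmul_mul : ∀ (a a' : A) (b b' : B), tmul a b * tmul a' b' = tmul (a * a') (b * b')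
  tmul_star : ∀ (a : A) (b : B), star (tmul a b) = tmul (star a) (star b)
  tmul_one : tmul 1 1 = 1
  dense_span : Dense (↑(Submodule.span ℂ {c : C | ∃ a b, c = tmul a b}) : Set C)

section AuxCP

open ComplexStarModule

variable {H : Type*} [NormedAddCommGroup H] [InnerProductSpace ℂ H]

lemma cp_star_mul_self_nonneg {A : Type*} [Ring A] [StarRing A] [Algebra ℂ A]
    {Ψ : A →ₗ[ℂ] H →L[ℂ] H} (hΨ : IsCompletelyPositive Ψ) (s : A) (v : H) :
    0 ≤ ⟪v, Ψ (star s * s) v⟫ := by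
  simpa using hΨ 1 (fun _ => s) (fun _ => v)

variable {A : Type*} [CStarAlgebra A] [PartialOrder A] [StarOrderedRing A]

lemma cp_nonneg {Ψ : A →ₗ[ℂ] H →L[ℂ] H} (hΨ : IsCompletelyPositive Ψ)
    {c : A} (hc : 0 ≤ c) (v : H) : 0 ≤ ⟪v, Ψ c v⟫ := by
  have h1 : star (CFC.sqrt c) * CFC.sqrt c = c := by
    rw [(IsSelfAdjoint.of_nonneg (CFC.sqrt_nonneg (a := c))).star_eq,
      CFC.sqrt_mul_sqrt_self c hc]
  exact h1 ▸ cp_star_mul_self_nonneg hΨ (CFC.sqrt c) v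

lemma cp_selfadj_bound {Ψ : A →ₗ[ℂ] H →L[ℂ] H} (hΨ : IsCompletelyPositive Ψ)
    {h : A} (hh : IsSelfAdjoint h) (v : H) :
    ‖⟪v, Ψ h v⟫‖ ≤ ‖h‖ * ‖⟪v, Ψ 1 v⟫‖ := by
  have hm : 0 ≤ ⟪v, Ψ 1 v⟫ := by
    simpa using cp_star_mul_self_nonneg hΨ 1 v
  have halg : Ψ (algebraMap ℝ A ‖h‖) = (‖h‖ : ℂ) • Ψ 1 := by
    rw [IsScalarTower.algebraMap_apply ℝ ℂ A, Algebra.algebraMap_eq_smul_one, map_smul]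
    norm_num
  have h1 : 0 ≤ (‖h‖ : ℂ) * ⟪v, Ψ 1 v⟫ - ⟪v, Ψ h v⟫ := by
    have hpos : (0 : A) ≤ algebraMap ℝ A ‖h‖ - h := sub_nonneg.mpr hh.le_algebraMap_norm_self
    have e : ⟪v, Ψ (algebraMap ℝ A ‖h‖ - h) v⟫ = (‖h‖ : ℂ) * ⟪v, Ψ 1 v⟫ - ⟪v, Ψ h v⟫ := by
      rw [map_sub, halg, ContinuousLinearMap.sub_apply, ContinuousLinearMap.smul_apply,
        inner_sub_right, inner_smul_right]
    exact e ▸ cp_nonneg hΨ hpos v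
  have h2 : 0 ≤ (‖h‖ : ℂ) * ⟪v, Ψ 1 v⟫ + ⟪v, Ψ h v⟫ := by
    have hpos : (0 : A) ≤ algebraMap ℝ A ‖h‖ + h := by
      have h3 := hh.neg_algebraMap_norm_le_self
      rw [← sub_nonneg, sub_neg_eq_add, add_comm] at h3
      exact h3
    have e : ⟪v, Ψ (algebraMap ℝ A ‖h‖ + h) v⟫ = (‖h‖ : ℂ) * ⟪v, Ψ 1 v⟫ + ⟪v, Ψ h v⟫ := by
      rw [map_add, halg, ContinuousLinearMap.add_apply, ContinuousLinearMap.smul_apply,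
        inner_add_right, inner_smul_right]
    exact e ▸ cp_nonneg hΨ hpos v
  set m := ⟪v, Ψ 1 v⟫ with hmdef
  set z := ⟪v, Ψ h v⟫ with hzdef
  rw [Complex.le_def] at h1 h2 hm
  simp only [Complex.zero_re, Complex.zero_im, Complex.sub_re, Complex.sub_im,
    Complex.add_re, Complex.add_im, Complex.mul_re, Complex.mul_im,
    Complex.ofReal_re, Complex.ofReal_im, zero_mul, mul_zero, sub_zero, add_zero,
    zero_add, zero_sub, neg_zero] at h1 h2 hm
  have hmim : m.im = 0 := hm.2.symm
  rw [hmim, mul_zero] at h1 h2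
  have him : z.im = 0 := by
    have e1 := h1.2
    have e2 := h2.2
    linarith
  have hre : |z.re| ≤ ‖h‖ * m.re := by
    rw [abs_le]
    constructor
    · linarith [h2.1]
    · linarith [h1.1]
  have hz : z = ((z.re : ℝ) : ℂ) := Complex.ext rfl (by simp [him])
  have hmm : m = ((m.re : ℝ) : ℂ) := Complex.ext rfl (by simp [hmim])
  rw [hz, hmm, Complex.norm_real, Complex.norm_real]
  rw [Real.norm_eq_abs, Real.norm_eq_abs, abs_of_nonneg hm.1]
  exact hre

lemma cp_norm_le {Ψ : A →ₗ[ℂ] H →L[ℂ] H} (hΨ : IsCompletelyPositive Ψ)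
    (c : A) (v : H) :
    ‖⟪v, Ψ c v⟫‖ ≤ 2 * ‖⟪v, Ψ 1 v⟫‖ * ‖c‖ := by
  set M := ‖⟪v, Ψ 1 v⟫‖ with hM
  have hre : ‖(ℜ c : A)‖ ≤ ‖c‖ := by
    rw [realPart_apply_coe, norm_smul]
    have : ‖c + star c‖ ≤ ‖c‖ + ‖c‖ := (norm_add_le _ _).trans (by simp [norm_star])
    calc ‖(2 : ℝ)⁻¹‖ * ‖c + star c‖ ≤ ‖(2 : ℝ)⁻¹‖ * (‖c‖ + ‖c‖) := by
          gcongr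
    _ = ‖c‖ := by
          rw [Real.norm_eq_abs, abs_of_nonneg (by norm_num : (0:ℝ) ≤ (2:ℝ)⁻¹)]
          ring
  have him : ‖(ℑ c : A)‖ ≤ ‖c‖ := by
    rw [imaginaryPart_apply_coe, norm_smul, norm_smul]
    have : ‖c - star c‖ ≤ ‖c‖ + ‖c‖ := (norm_sub_le _ _).trans (by simp [norm_star])
    calc ‖-Complex.I‖ * (‖(2 : ℝ)⁻¹‖ * ‖c - star c‖)
        ≤ ‖-Complex.I‖ * (‖(2 : ℝ)⁻¹‖ * (‖c‖ + ‖c‖)) := by gcongr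
    _ = ‖c‖ := by
          rw [norm_neg, Complex.norm_I, Real.norm_eq_abs,
            abs_of_nonneg (by norm_num : (0:ℝ) ≤ (2:ℝ)⁻¹)]
          ring
  have hb1 : ‖⟪v, Ψ (ℜ c : A) v⟫‖ ≤ ‖c‖ * M :=
    (cp_selfadj_bound hΨ (ℜ c).2 v).trans (by gcongr)
  have hb2 : ‖⟪v, Ψ (ℑ c : A) v⟫‖ ≤ ‖c‖ * M :=
    (cp_selfadj_bound hΨ (ℑ c).2 v).trans (by gcongr)
  have hdecomp : (ℜ c : A) + Complex.I • (ℑ c : A) = c := realPart_add_I_smul_imaginaryPart c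
  calc ‖⟪v, Ψ c v⟫‖ = ‖⟪v, Ψ (ℜ c : A) v⟫ + Complex.I * ⟪v, Ψ (ℑ c : A) v⟫‖ := by
        rw [← hdecomp]
        simp [map_add, map_smul, inner_add_right, inner_smul_right]
  _ ≤ ‖⟪v, Ψ (ℜ c : A) v⟫‖ + ‖Complex.I * ⟪v, Ψ (ℑ c : A) v⟫‖ := norm_add_le _ _
  _ = ‖⟪v, Ψ (ℜ c : A) v⟫‖ + ‖⟪v, Ψ (ℑ c : A) v⟫‖ := by rw [norm_mul]; simp
  _ ≤ ‖c‖ * M + ‖c‖ * M := add_le_add hb1 hb2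
  _ = 2 * M * ‖c‖ := by ring

end AuxCP

section Ext

variable {H : Type*} [NormedAddCommGroup H] [InnerProductSpace ℂ H]

lemma cp_eq_of_eqOn_dense {C : Type*} [CStarAlgebra C]
    {Ψ Ψ' : C →ₗ[ℂ] H →L[ℂ] H} (hΨ : IsCompletelyPositive Ψ) (hΨ' : IsCompletelyPositive Ψ')
    {s : Set C} (hd : Dense (↑(Submodule.span ℂ s) : Set C))
    (heq : ∀ c ∈ s, Ψ c = Ψ' c) : Ψ = Ψ' := by
  letI : PartialOrder C := CStarAlgebra.spectralOrder C
  haveI : StarOrderedRing C := CStarAlgebra.spectralOrderedRing C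
  have key : ∀ (v : H) (c : C), ⟪v, Ψ c v⟫ = ⟪v, Ψ' c v⟫ := by
    intro v
    set F : C →ₗ[ℂ] ℂ :=
      { toFun := fun c => ⟪v, Ψ c v⟫ - ⟪v, Ψ' c v⟫
        map_add' := fun x y => by simp [map_add, inner_add_right]; ring
        map_smul' := fun r x => by simp [map_smul, inner_smul_right]; ring } with hF
    have hbound : ∀ c, ‖F c‖ ≤ (2 * ‖⟪v, Ψ 1 v⟫‖ + 2 * ‖⟪v, Ψ' 1 v⟫‖) * ‖c‖ := by
      intro c
      calc ‖F c‖ ≤ ‖⟪v, Ψ c v⟫‖ + ‖⟪v, Ψ' c v⟫‖ := norm_sub_le _ _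
      _ ≤ 2 * ‖⟪v, Ψ 1 v⟫‖ * ‖c‖ + 2 * ‖⟪v, Ψ' 1 v⟫‖ * ‖c‖ :=
          add_le_add (cp_norm_le hΨ c v) (cp_norm_le hΨ' c v)
      _ = _ := by ring
    have hcont : Continuous F := AddMonoidHomClass.continuous_of_bound F _ hbound
    have hsub : Submodule.span ℂ s ≤ LinearMap.ker F :=
      Submodule.span_le.mpr fun c hc => by
        simp [LinearMap.mem_ker, hF, heq c hc]
    have hzero : (fun c => F c) = fun _ => (0 : ℂ) :=
      Continuous.ext_on hd hcont continuous_const fun x hx =>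
        LinearMap.mem_ker.mp (hsub hx)
    intro c
    have := congrFun hzero c
    simpa [hF, sub_eq_zero] using this
  refine LinearMap.ext fun c => ?_
  have hT : ∀ x : H, ⟪((Ψ c - Ψ' c : H →L[ℂ] H) : H →ₗ[ℂ] H) x, x⟫ = 0 := by
    intro x
    have h0 : ⟪x, (Ψ c - Ψ' c) x⟫ = 0 := by
      simp [ContinuousLinearMap.sub_apply, inner_sub_right, key x c]
    have := congrArg (starRingEnd ℂ) h0
    rwa [inner_conj_symm, map_zero] at this
  have := (inner_map_self_eq_zero _).mp hT
  have h2 : Ψ c - Ψ' c = 0 := by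
    exact ContinuousLinearMap.coe_injective (by rw [ContinuousLinearMap.coe_zero]; exact this)
  exact sub_eq_zero.mp h2

end Ext

section Main

open ComplexStarModule

variable {H : Type*} [NormedAddCommGroup H] [InnerProductSpace ℂ H] [CompleteSpace H]

lemma joint_map_unique_aux
    {A B C : Type*} [CStarAlgebra A] [CStarAlgebra B] [CStarAlgebra C]
    (tmul : A →ₗ[ℂ] B →ₗ[ℂ] C) (htp : IsTensorProductOfAlgebras A B C tmul)
    (P : H →L[ℂ] H)
    (Φ₁ : A →ₗ[ℂ] H →L[ℂ] H) (Φ₂ : B →ₗ[ℂ] H →L[ℂ] H)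
    (hΦ₂ : Φ₂ ∈ CPWithUnit B H P)
    (Ψ Ψ' : C →ₗ[ℂ] H →L[ℂ] H)
    (hΨ : Ψ ∈ CPWithUnit C H P) (hΨ' : Ψ' ∈ CPWithUnit C H P)
    (hmarg₁ : ∀ a : A, Ψ (tmul a 1) = Φ₁ a) (hmarg₂ : ∀ b : B, Ψ (tmul 1 b) = Φ₂ b)
    (hmarg₁' : ∀ a : A, Ψ' (tmul a 1) = Φ₁ a) (hmarg₂' : ∀ b : B, Ψ' (tmul 1 b) = Φ₂ b)
    (hext : IsExtremalIn (CPWithUnit A H P) Φ₁) :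
    Ψ = Ψ' := by
  letI : PartialOrder B := CStarAlgebra.spectralOrder B
  haveI : StarOrderedRing B := CStarAlgebra.spectralOrderedRing B
  have cpPart : ∀ (Θ : C →ₗ[ℂ] H →L[ℂ] H), IsCompletelyPositive Θ → ∀ (b' : B), 0 ≤ b' →
      ∀ (n : ℕ) (a : Fin n → A) (v : Fin n → H),
      0 ≤ ∑ j, ∑ k, ⟪v j, Θ (tmul (star (a j) * a k) b') (v k)⟫ := by
    intro Θ hΘ b' hb' n a v
    set r := CFC.sqrt b' with hr
    have hrsa : IsSelfAdjoint r := IsSelfAdjoint.of_nonneg (CFC.sqrt_nonneg b')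
    have hrr : r * r = b' := CFC.sqrt_mul_sqrt_self b' hb'
    have h0 := hΘ n (fun j => tmul (a j) r) v
    simp only [htp.tmul_star, hrsa.star_eq, htp.tmul_mul, hrr] at h0
    exact h0
  have key : ∀ b : B, 0 ≤ b → b ≤ 1 → ∀ a : A, Ψ (tmul a b) = Ψ' (tmul a b) := by
    intro b hb0 hb1 a0
    have h1b : (0 : B) ≤ 1 - b := sub_nonneg.mpr hb1
    set Λ : A →ₗ[ℂ] H →L[ℂ] H := Ψ ∘ₗ (tmul.flip b) + Ψ' ∘ₗ (tmul.flip (1 - b)) with hΛdef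
    set Λ' : A →ₗ[ℂ] H →L[ℂ] H := Ψ' ∘ₗ (tmul.flip b) + Ψ ∘ₗ (tmul.flip (1 - b)) with hΛ'def
    have happ : ∀ a : A, Λ a = Ψ (tmul a b) + Ψ' (tmul a (1 - b)) := fun a => by
      simp [hΛdef, LinearMap.flip_apply]
    have happ' : ∀ a : A, Λ' a = Ψ' (tmul a b) + Ψ (tmul a (1 - b)) := fun a => by
      simp [hΛ'def, LinearMap.flip_apply]
    have hΛcp : IsCompletelyPositive Λ := by
      intro n a v
      have e : ∀ j k : Fin n, ⟪v j, Λ (star (a j) * a k) (v k)⟫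
          = ⟪v j, Ψ (tmul (star (a j) * a k) b) (v k)⟫
            + ⟪v j, Ψ' (tmul (star (a j) * a k) (1 - b)) (v k)⟫ := by
        intro j k
        rw [happ, ContinuousLinearMap.add_apply, inner_add_right]
      have esum : ∑ j, ∑ k, ⟪v j, Λ (star (a j) * a k) (v k)⟫
          = (∑ j, ∑ k, ⟪v j, Ψ (tmul (star (a j) * a k) b) (v k)⟫)
            + ∑ j, ∑ k, ⟪v j, Ψ' (tmul (star (a j) * a k) (1 - b)) (v k)⟫ := by
        simp only [e, Finset.sum_add_distrib]
      rw [esum]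
      exact add_nonneg (cpPart Ψ hΨ.1 b hb0 n a v) (cpPart Ψ' hΨ'.1 (1 - b) h1b n a v)
    have hΛ'cp : IsCompletelyPositive Λ' := by
      intro n a v
      have e : ∀ j k : Fin n, ⟪v j, Λ' (star (a j) * a k) (v k)⟫
          = ⟪v j, Ψ' (tmul (star (a j) * a k) b) (v k)⟫
            + ⟪v j, Ψ (tmul (star (a j) * a k) (1 - b)) (v k)⟫ := by
        intro j k
        rw [happ', ContinuousLinearMap.add_apply, inner_add_right]
      have esum : ∑ j, ∑ k, ⟪v j, Λ' (star (a j) * a k) (v k)⟫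
          = (∑ j, ∑ k, ⟪v j, Ψ' (tmul (star (a j) * a k) b) (v k)⟫)
            + ∑ j, ∑ k, ⟪v j, Ψ (tmul (star (a j) * a k) (1 - b)) (v k)⟫ := by
        simp only [e, Finset.sum_add_distrib]
      rw [esum]
      exact add_nonneg (cpPart Ψ' hΨ'.1 b hb0 n a v) (cpPart Ψ hΨ.1 (1 - b) h1b n a v)
    have et1 : tmul 1 (1 - b) = tmul 1 1 - tmul 1 b := map_sub _ _ _
    have hΛ1 : Λ 1 = P := by
      rw [happ 1, et1, map_sub, hmarg₂ b, hmarg₂' b]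
      have h11 : Ψ' (tmul 1 1) = Φ₂ 1 := hmarg₂' 1
      rw [h11, hΦ₂.2]
      abel
    have hΛ'1 : Λ' 1 = P := by
      rw [happ' 1, et1, map_sub, hmarg₂ b, hmarg₂' b]
      have h11 : Ψ (tmul 1 1) = Φ₂ 1 := hmarg₂ 1
      rw [h11, hΦ₂.2]
      abel
    have hsum : ∀ a : A, Λ a + Λ' a = (2 : ℂ) • Φ₁ a := by
      intro a
      have et : tmul a (1 - b) = tmul a 1 - tmul a b := map_sub _ _ _
      rw [happ a, happ' a, et, map_sub, map_sub, hmarg₁ a, hmarg₁' a, two_smul]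
      abel
    have hconv : Φ₁ = ((1/2 : ℝ) : ℂ) • Λ + ((1 - (1/2 : ℝ) : ℝ) : ℂ) • Λ' := by
      refine LinearMap.ext fun a => ?_
      have hhalf : ((1 - (1/2 : ℝ) : ℝ) : ℂ) = ((1/2 : ℝ) : ℂ) := by norm_num
      rw [LinearMap.add_apply, LinearMap.smul_apply, LinearMap.smul_apply, hhalf,
        ← smul_add, hsum a, smul_smul]
      norm_num
    have hΛeq : Λ = Λ' :=
      hext.2 Λ ⟨hΛcp, hΛ1⟩ Λ' ⟨hΛ'cp, hΛ'1⟩ (1/2) (by norm_num) (by norm_num) hconv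
    have h2 := LinearMap.congr_fun hΛeq a0
    rw [happ a0, happ' a0] at h2
    have e : tmul a0 (1 - b) = tmul a0 1 - tmul a0 b := map_sub _ _ _
    rw [e, map_sub, map_sub, hmarg₁ a0, hmarg₁' a0] at h2
    have h3 : (2 : ℂ) • (Ψ (tmul a0 b) - Ψ' (tmul a0 b)) = 0 := by
      have h4 : (2 : ℂ) • (Ψ (tmul a0 b) - Ψ' (tmul a0 b))
          = (Ψ (tmul a0 b) + (Φ₁ a0 - Ψ' (tmul a0 b)))
            - (Ψ' (tmul a0 b) + (Φ₁ a0 - Ψ (tmul a0 b))) := by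
        rw [two_smul]; abel
      rw [h4, h2, sub_self]
    rcases smul_eq_zero.mp h3 with h4 | h4
    · exact absurd h4 two_ne_zero
    · exact sub_eq_zero.mp h4
  have key2 : ∀ (a : A) (b : B), Ψ (tmul a b) = Ψ' (tmul a b) := by
    have keysa : ∀ h : B, IsSelfAdjoint h → ∀ a : A, Ψ (tmul a h) = Ψ' (tmul a h) := by
      intro h hh a
      have keypos : ∀ p : B, 0 ≤ p → Ψ (tmul a p) = Ψ' (tmul a p) := by
        intro p hp
        by_cases hzero : p = 0
        · simp [hzero]
        have ht : (0 : ℝ) < ‖p‖ := norm_pos_iff.mpr hzero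
        set t : ℝ := ‖p‖ with htdef
        set p' : B := ((t : ℂ))⁻¹ • p with hp'def
        have hp'0 : 0 ≤ p' := by
          obtain ⟨r, hrr⟩ : ∃ r : B, star r * r = p :=
            ⟨CFC.sqrt p, by
              rw [(IsSelfAdjoint.of_nonneg (CFC.sqrt_nonneg (a := p))).star_eq,
                CFC.sqrt_mul_sqrt_self p hp]⟩
          have hw : star ((Real.sqrt t⁻¹ : ℂ) • r) * ((Real.sqrt t⁻¹ : ℂ) • r) = p' := by
            rw [star_smul, Complex.star_def, Complex.conj_ofReal, smul_mul_assoc,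
              mul_smul_comm, hrr, smul_smul, hp'def]
            congr 1
            rw [← Complex.ofReal_mul, Real.mul_self_sqrt (inv_nonneg.mpr ht.le),
              Complex.ofReal_inv]
          exact hw ▸ star_mul_self_nonneg _
        have hp'1 : p' ≤ 1 := by
          refine (CStarAlgebra.norm_le_one_iff_of_nonneg p' hp'0).mp ?_
          rw [hp'def, norm_smul]
          simp only [norm_inv, Complex.norm_real, Real.norm_eq_abs, abs_of_nonneg ht.le]
          exact le_of_eq (inv_mul_cancel₀ (ne_of_gt ht))
        have hpt : p = (t : ℂ) • p' :=
          (smul_inv_smul₀ (by exact_mod_cast ht.ne') p).symm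
        calc Ψ (tmul a p) = (t : ℂ) • Ψ (tmul a p') := by rw [hpt, map_smul, map_smul]
        _ = (t : ℂ) • Ψ' (tmul a p') := by rw [key p' hp'0 hp'1 a]
        _ = Ψ' (tmul a p) := by rw [← map_smul, ← map_smul, ← hpt]
      have hpos : (0 : B) ≤ algebraMap ℝ B ‖h‖ + h := by
        have h3 := hh.neg_algebraMap_norm_le_self
        rw [← sub_nonneg, sub_neg_eq_add, add_comm] at h3
        exact h3
      have halg : algebraMap ℝ B ‖h‖ = ((‖h‖ : ℝ) : ℂ) • (1 : B) := by
        rw [IsScalarTower.algebraMap_apply ℝ ℂ B, Algebra.algebraMap_eq_smul_one]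
        norm_num
      have e : tmul a h = tmul a (algebraMap ℝ B ‖h‖ + h) - ((‖h‖ : ℝ) : ℂ) • tmul a 1 := by
        rw [← map_smul, ← map_sub]
        congr 1
        rw [halg]
        abel
      rw [e, map_sub, map_sub, map_smul, map_smul, keypos _ hpos, hmarg₁ a, hmarg₁' a]
    intro a b
    have hb : (ℜ b : B) + Complex.I • (ℑ b : B) = b := realPart_add_I_smul_imaginaryPart b
    have e : tmul a b = tmul a (ℜ b : B) + Complex.I • tmul a (ℑ b : B) := by
      rw [← map_smul, ← map_add, hb]
    rw [e, map_add, map_add, map_smul, map_smul, keysa _ (ℜ b).2 a, keysa _ (ℑ b).2 a]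
  refine cp_eq_of_eqOn_dense hΨ.1 hΨ'.1 htp.dense_span ?_
  rintro c ⟨a, b, rfl⟩
  exact key2 a b

end Main

/-- **Uniqueness of the joint map** (Theorem 7(a) of the paper). Suppose
`Φ₁ ∈ CP_P(A;H)` and `Φ₂ ∈ CP_P(B;H)` are compatible, i.e. they are the marginals of some
`Ψ ∈ CP_P(A ⊗ B; H)`. If `Φ₁` is extremal in `CP_P(A;H)` or `Φ₂` is extremal in
`CP_P(B;H)`, then the joint map is unique: any `Ψ' ∈ CP_P(A ⊗ B; H)` with the same
marginals equals `Ψ`. -/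
theorem joint_map_unique_of_extremal_marginal
    {A B C : Type*} [CStarAlgebra A] [CStarAlgebra B] [CStarAlgebra C]
    (tmul : A →ₗ[ℂ] B →ₗ[ℂ] C) (htp : IsTensorProductOfAlgebras A B C tmul)
    {H : Type*} [NormedAddCommGroup H] [InnerProductSpace ℂ H] [CompleteSpace H]
    (P : H →L[ℂ] H) (hP : P.IsPositive)
    (Φ₁ : A →ₗ[ℂ] H →L[ℂ] H) (Φ₂ : B →ₗ[ℂ] H →L[ℂ] H)
    (hΦ₁ : Φ₁ ∈ CPWithUnit A H P) (hΦ₂ : Φ₂ ∈ CPWithUnit B H P)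
    (Ψ Ψ' : C →ₗ[ℂ] H →L[ℂ] H)
    (hΨ : Ψ ∈ CPWithUnit C H P) (hΨ' : Ψ' ∈ CPWithUnit C H P)
    (hmarg₁ : ∀ a : A, Ψ (tmul a 1) = Φ₁ a) (hmarg₂ : ∀ b : B, Ψ (tmul 1 b) = Φ₂ b)
    (hmarg₁' : ∀ a : A, Ψ' (tmul a 1) = Φ₁ a) (hmarg₂' : ∀ b : B, Ψ' (tmul 1 b) = Φ₂ b)
    (hext : IsExtremalIn (CPWithUnit A H P) Φ₁ ∨ IsExtremalIn (CPWithUnit B H P) Φ₂) :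
    Ψ = Ψ' := by
  rcases hext with hext | hext
  · exact joint_map_unique_aux tmul htp P Φ₁ Φ₂ hΦ₂ Ψ Ψ' hΨ hΨ'
      hmarg₁ hmarg₂ hmarg₁' hmarg₂' hext
  · have htp' : IsTensorProductOfAlgebras B A C tmul.flip := by
      constructor
      · intro b b' a a'
        simp only [LinearMap.flip_apply]
        exact htp.tmul_mul a a' b b'
      · intro b a
        simp only [LinearMap.flip_apply]
        exact htp.tmul_star a b
      · simp only [LinearMap.flip_apply]
        exact htp.tmul_one
      · have hset : {c : C | ∃ b a, c = tmul.flip b a} = {c : C | ∃ a b, c = tmul a b} := by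
          ext c
          simp only [LinearMap.flip_apply, Set.mem_setOf_eq]
          exact ⟨fun ⟨b, a, h⟩ => ⟨a, b, h⟩, fun ⟨a, b, h⟩ => ⟨b, a, h⟩⟩
        rw [hset]
        exact htp.dense_span
    exact joint_map_unique_aux tmul.flip htp' P Φ₂ Φ₁ hΦ₁ Ψ Ψ' hΨ hΨ'
      (fun b => by rw [LinearMap.flip_apply]; exact hmarg₂ b)
      (fun a => by rw [LinearMap.flip_apply]; exact hmarg₁ a)
      (fun b => by rw [LinearMap.flip_apply]; exact hmarg₂' b)
      (fun a => by rw [LinearMap.flip_apply]; exact hmarg₁' a)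
      hext
end
end

section
/- Let (Ω, Σ) and (Ω', Σ') be measurable spaces, H a separable complex Hilbert space, and let M₁ ∈ O_Σ(H) and M₂ ∈ O_{Σ'}(H) be jointly measurable observables. If M₁ is sharp (projection valued) or M₂ is sharp, then M₁(X) and M₂(Y) commute for all X ∈ Σ, Y ∈ Σ', and the unique joint observable M ∈ O_{Σ⊗Σ'}(H) is determined by M(X × Y) = M₁(X)M₂(Y) for all X ∈ Σ, Y ∈ Σ'. -/
open scoped ComplexOrder ComplexInnerProductSpace Topology

noncomputable section

/-- A normalized positive operator valued measure (POVM, observable) on the measurable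
space `Ω` with values in `L(H)`: positive operator values, `M univ = 1`, and σ-additivity
in the weak operator topology. -/
def IsPOVM {Ω : Type*} [MeasurableSpace Ω] {H : Type*}
    [NormedAddCommGroup H] [InnerProductSpace ℂ H] [CompleteSpace H]
    (M : Set Ω → H →L[ℂ] H) : Prop :=
  (∀ X : Set Ω, MeasurableSet X → (M X).IsPositive) ∧
  M Set.univ = 1 ∧
  ∀ f : ℕ → Set Ω, (∀ n, MeasurableSet (f n)) → Pairwise (Function.onFun Disjoint f) →
    ∀ x y : H, HasSum (fun n => ⟪x, M (f n) y⟫) ⟪x, M (⋃ n, f n) y⟫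

/-- A POVM is extremal in the convex set of all POVMs on the same σ-algebra. -/
def IsExtremalPOVM {Ω : Type*} [MeasurableSpace Ω] {H : Type*}
    [NormedAddCommGroup H] [InnerProductSpace ℂ H] [CompleteSpace H]
    (M : Set Ω → H →L[ℂ] H) : Prop :=
  IsPOVM M ∧ ∀ M₁ M₂ : Set Ω → H →L[ℂ] H, IsPOVM M₁ → IsPOVM M₂ →
    ∀ t : ℝ, 0 < t → t < 1 →
    (∀ X : Set Ω, MeasurableSet X → M X = (t : ℂ) • M₁ X + ((1 - t : ℝ) : ℂ) • M₂ X) →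
    ∀ X : Set Ω, MeasurableSet X → M₁ X = M₂ X

section Aux

variable {H : Type*} [NormedAddCommGroup H] [InnerProductSpace ℂ H] [CompleteSpace H]

/-- Operators with equal matrix elements are equal. -/
lemma clm_ext_inner {A B : H →L[ℂ] H} (h : ∀ x y : H, ⟪x, A y⟫ = ⟪x, B y⟫) : A = B := by
  ext y
  exact ext_inner_left ℂ fun v => h v y

/-- A positive operator kills any vector on which its quadratic form vanishes. -/
lemma pos_apply_eq_zero {A : H →L[ℂ] H} (hA : A.IsPositive)
    {x : H} (hx : Complex.re ⟪A x, x⟫ = 0) : A x = 0 := by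
  have hsym : ∀ u v : H, ⟪A u, v⟫ = ⟪u, A v⟫ := by
    intro u v
    have := hA.isSelfAdjoint.isSymmetric u v
    simpa using this
  have hpos : ∀ u : H, 0 ≤ Complex.re ⟪A u, u⟫ := by
    intro u
    simpa [ContinuousLinearMap.reApplyInnerSelf_apply] using hA.2 u
  have hre : ∀ y : H, Complex.re ⟪A x, y⟫ = 0 := by
    intro y
    have hAyx : ⟪A y, x⟫ = (starRingEnd ℂ) ⟪A x, y⟫ := by
      rw [hsym y x]
      exact (inner_conj_symm y (A x)).symm
    have key : ∀ t : ℝ, 0 ≤ 2 * t * Complex.re ⟪A x, y⟫ + t ^ 2 * Complex.re ⟪A y, y⟫ := by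
      intro t
      have h0 := hpos (x + (t : ℂ) • y)
      have hcalc : ⟪A (x + (t : ℂ) • y), x + (t : ℂ) • y⟫ =
          ⟪A x, x⟫ + (t : ℂ) * ⟪A x, y⟫ + (t : ℂ) * (starRingEnd ℂ) ⟪A x, y⟫ +
            ((t : ℝ) ^ 2 : ℝ) * ⟪A y, y⟫ := by
        rw [map_add, map_smul, inner_add_left, inner_add_right, inner_add_right,
          inner_smul_left, inner_smul_left, inner_smul_right, inner_smul_right, hAyx,
          Complex.conj_ofReal]
        push_cast
        ring
      rw [hcalc] at h0
      simp only [Complex.add_re, Complex.mul_re, Complex.ofReal_re, Complex.ofReal_im,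
        Complex.conj_re, Complex.conj_im, hx] at h0
      nlinarith [h0]
    set b : ℝ := Complex.re ⟪A x, y⟫ with hb
    set c : ℝ := Complex.re ⟪A y, y⟫ with hc
    have hc0 : 0 ≤ c := hpos y
    by_contra hbne
    have ht := key (-b / (c + 1))
    have hc1 : (0 : ℝ) < c + 1 := by linarith
    have hb2 : 0 < b ^ 2 := by positivity
    have heq : 2 * (-b / (c + 1)) * b + (-b / (c + 1)) ^ 2 * c
        = -(b ^ 2) * (c + 2) / (c + 1) ^ 2 := by
      field_simp
      ring
    rw [heq] at ht
    have hneg : -(b ^ 2) * (c + 2) / (c + 1) ^ 2 < 0 := by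
      apply div_neg_of_neg_of_pos
      · nlinarith
      · positivity
    linarith
  have hall : ∀ y : H, ⟪A x, y⟫ = 0 := by
    intro y
    have h1 := hre y
    have h2 := hre ((Complex.I : ℂ) • y)
    rw [inner_smul_right] at h2
    have him : Complex.im ⟪A x, y⟫ = 0 := by
      have hmul : Complex.re (Complex.I * ⟪A x, y⟫) = -Complex.im ⟪A x, y⟫ := by
        simp [Complex.mul_re]
      rw [hmul] at h2
      linarith
    exact Complex.ext h1 him
  have := hall (A x)
  rwa [inner_self_eq_zero] at this

/-- If `0 ≤ A ≤ P` with `P` a positive idempotent, then `P` absorbs `A`. -/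
lemma absorb_of_le_proj {A P : H →L[ℂ] H} (hA : A.IsPositive) (hP : IsIdempotentElem P)
    (hPpos : P.IsPositive) (hle : (P - A).IsPositive) : A * P = A ∧ P * A = A := by
  have hQ : ∀ x : H, A (x - P x) = 0 := by
    intro x
    apply pos_apply_eq_zero hA
    set q := x - P x with hq
    have hPq : P q = 0 := by
      have hPP : P (P x) = P x := by
        have h := congrFun (congrArg DFunLike.coe hP.eq) x
        simpa [ContinuousLinearMap.mul_apply] using h
      simp [hq, map_sub, hPP]
    have h1 : 0 ≤ Complex.re ⟪A q, q⟫ := (Complex.nonneg_iff.mp (hA.inner_nonneg_left q)).1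
    have h2 : 0 ≤ Complex.re ⟪(P - A) q, q⟫ := (Complex.nonneg_iff.mp (hle.inner_nonneg_left q)).1
    have h3 : ⟪P q, q⟫ = 0 := by rw [hPq, inner_zero_left]
    have h4 : Complex.re ⟪(P - A) q, q⟫ = -Complex.re ⟪A q, q⟫ := by
      rw [ContinuousLinearMap.sub_apply, inner_sub_left, h3]
      simp
    linarith [h4 ▸ h2]
  have hAP : A * P = A := by
    ext x
    have := hQ x
    rw [map_sub, sub_eq_zero] at this
    simpa [ContinuousLinearMap.mul_apply] using this.symm
  refine ⟨hAP, ?_⟩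
  -- take adjoints
  have hAsa := hA.isSelfAdjoint
  have hPsa := hPpos.isSelfAdjoint
  calc P * A = star (A * P) := by
        rw [star_mul, hPsa.star_eq, hAsa.star_eq]
    _ = star A := by rw [hAP]
    _ = A := hAsa.star_eq

end Aux

section POVM

variable {Ω : Type*} [MeasurableSpace Ω] {H : Type*}
  [NormedAddCommGroup H] [InnerProductSpace ℂ H] [CompleteSpace H]

lemma IsPOVM.empty {M : Set Ω → H →L[ℂ] H} (hM : IsPOVM M) : M ∅ = 0 := by
  apply clm_ext_inner
  intro x y
  have h := hM.2.2 (fun _ => ∅) (fun _ => MeasurableSet.empty)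
    (fun i j _ => disjoint_bot_left) x y
  have hU : (⋃ _ : ℕ, (∅ : Set Ω)) = ∅ := by simp
  rw [hU] at h
  have h0 : Filter.Tendsto (fun _ : ℕ => ⟪x, M ∅ y⟫) Filter.atTop (𝓝 0) :=
    h.summable.tendsto_atTop_zero
  have h1 : Filter.Tendsto (fun _ : ℕ => ⟪x, M ∅ y⟫) Filter.atTop (𝓝 ⟪x, M ∅ y⟫) :=
    tendsto_const_nhds
  have := tendsto_nhds_unique h1 h0
  simpa using this

lemma IsPOVM.union {M : Set Ω → H →L[ℂ] H} (hM : IsPOVM M) {A B : Set Ω}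
    (hA : MeasurableSet A) (hB : MeasurableSet B) (hd : Disjoint A B) :
    M (A ∪ B) = M A + M B := by
  apply clm_ext_inner
  intro x y
  set f : ℕ → Set Ω := fun n => if n = 0 then A else if n = 1 then B else ∅ with hf
  have hmeas : ∀ n, MeasurableSet (f n) := by
    intro n
    simp only [hf]
    split_ifs <;> first | exact hA | exact hB | exact MeasurableSet.empty
  have hdisj : Pairwise (Function.onFun Disjoint f) := by
    intro i j hij
    simp only [Function.onFun, hf]
    split_ifs with h1 h2 h3 h4 h5 <;>
      first
        | (exfalso; omega)
        | exact hd
        | exact hd.symm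
        | exact disjoint_bot_left
        | exact disjoint_bot_right
  have hU : (⋃ n, f n) = A ∪ B := by
    apply Set.Subset.antisymm
    · apply Set.iUnion_subset
      intro n
      simp only [hf]
      split_ifs with h1 h2
      · exact Set.subset_union_left
      · exact Set.subset_union_right
      · simp
    · intro z hz
      cases hz with
      | inl h => exact Set.mem_iUnion.2 ⟨0, by simpa [hf] using h⟩
      | inr h => exact Set.mem_iUnion.2 ⟨1, by simpa [hf] using h⟩
  have hsum := hM.2.2 f hmeas hdisj x y
  rw [hU] at hsum
  have hzero : ∀ n ∉ ({0, 1} : Finset ℕ), ⟪x, M (f n) y⟫ = 0 := by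
    intro n hn
    simp only [Finset.mem_insert, Finset.mem_singleton, not_or] at hn
    have : f n = ∅ := by simp [hf, hn.1, hn.2]
    rw [this, hM.empty]
    simp
  have hsum2 : HasSum (fun n => ⟪x, M (f n) y⟫) (∑ n ∈ ({0, 1} : Finset ℕ), ⟪x, M (f n) y⟫) :=
    hasSum_sum_of_ne_finset_zero hzero
  have := hsum.unique hsum2
  rw [this]
  have h01 : (∑ n ∈ ({0, 1} : Finset ℕ), ⟪x, M (f n) y⟫) = ⟪x, M A y⟫ + ⟪x, M B y⟫ := by
    rw [Finset.sum_insert (by simp), Finset.sum_singleton]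
    simp [hf]
  rw [h01]
  simp [inner_add_right]

lemma IsPOVM.compl {M : Set Ω → H →L[ℂ] H} (hM : IsPOVM M) {A : Set Ω}
    (hA : MeasurableSet A) : M Aᶜ = 1 - M A := by
  have h := hM.union hA hA.compl disjoint_compl_right
  rw [Set.union_compl_self, hM.2.1] at h
  rw [eq_sub_iff_add_eq, add_comm, ← h]

end POVM

section Core

variable {Ω Ω' : Type*} [MeasurableSpace Ω] [MeasurableSpace Ω']
  {H : Type*} [NormedAddCommGroup H] [InnerProductSpace ℂ H] [CompleteSpace H]

/-- Core computation: if the first marginal is sharp, the joint observable factorizes on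
rectangles and the marginals commute. -/
lemma joint_core
    (M₁ : Set Ω → H →L[ℂ] H) (M₂ : Set Ω' → H →L[ℂ] H)
    (hM₁ : IsPOVM M₁) (hM₂ : IsPOVM M₂)
    (M : Set (Ω × Ω') → H →L[ℂ] H) (hM : IsPOVM M)
    (hmarg₁ : ∀ X : Set Ω, MeasurableSet X → M (X ×ˢ (Set.univ : Set Ω')) = M₁ X)
    (hmarg₂ : ∀ Y : Set Ω', MeasurableSet Y → M ((Set.univ : Set Ω) ×ˢ Y) = M₂ Y)
    (hsharp : ∀ X : Set Ω, MeasurableSet X → IsIdempotentElem (M₁ X))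
    {X : Set Ω} {Y : Set Ω'} (hX : MeasurableSet X) (hY : MeasurableSet Y) :
    Commute (M₁ X) (M₂ Y) ∧ M (X ×ˢ Y) = M₁ X * M₂ Y := by
  set P := M₁ X with hPdef
  set B := M₂ Y with hBdef
  have hPpos : P.IsPositive := hM₁.1 X hX
  have hPproj : IsIdempotentElem P := hsharp X hX
  have hE₁pos : (M (X ×ˢ Y)).IsPositive := hM.1 _ (hX.prod hY)
  have hE₂pos : (M (Xᶜ ×ˢ Y)).IsPositive := hM.1 _ (hX.compl.prod hY)
  -- E₁ + E₃ = P
  have hsplit1 : M (X ×ˢ Y) + M (X ×ˢ Yᶜ) = P := by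
    have hu : (X ×ˢ Y) ∪ (X ×ˢ Yᶜ) = X ×ˢ (Set.univ : Set Ω') := by
      rw [← Set.prod_union, Set.union_compl_self]
    have hd : Disjoint (X ×ˢ Y) (X ×ˢ Yᶜ) :=
      Set.disjoint_prod.2 (Or.inr disjoint_compl_right)
    have := hM.union (hX.prod hY) (hX.prod hY.compl) hd
    rw [hu, hmarg₁ X hX] at this
    exact this.symm
  -- E₂ + E₄ = M₁ Xᶜ = 1 - P
  have hsplit2 : M (Xᶜ ×ˢ Y) + M (Xᶜ ×ˢ Yᶜ) = 1 - P := by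
    have hu : (Xᶜ ×ˢ Y) ∪ (Xᶜ ×ˢ Yᶜ) = Xᶜ ×ˢ (Set.univ : Set Ω') := by
      rw [← Set.prod_union, Set.union_compl_self]
    have hd : Disjoint (Xᶜ ×ˢ Y) (Xᶜ ×ˢ Yᶜ) :=
      Set.disjoint_prod.2 (Or.inr disjoint_compl_right)
    have := hM.union (hX.compl.prod hY) (hX.compl.prod hY.compl) hd
    rw [hu, hmarg₁ Xᶜ hX.compl, hM₁.compl hX] at this
    exact this.symm
  -- E₁ + E₂ = B
  have hsplit3 : M (X ×ˢ Y) + M (Xᶜ ×ˢ Y) = B := by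
    have hu : (X ×ˢ Y) ∪ (Xᶜ ×ˢ Y) = (Set.univ : Set Ω) ×ˢ Y := by
      rw [← Set.union_prod, Set.union_compl_self]
    have hd : Disjoint (X ×ˢ Y) (Xᶜ ×ˢ Y) :=
      Set.disjoint_prod.2 (Or.inl disjoint_compl_right)
    have := hM.union (hX.prod hY) (hX.compl.prod hY) hd
    rw [hu, hmarg₂ Y hY] at this
    exact this.symm
  -- E₁ is absorbed by P
  have hle1 : (P - M (X ×ˢ Y)).IsPositive := by
    have : P - M (X ×ˢ Y) = M (X ×ˢ Yᶜ) := by rw [← hsplit1]; abel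
    rw [this]
    exact hM.1 _ (hX.prod hY.compl)
  obtain ⟨hE₁P, hPE₁⟩ := absorb_of_le_proj hE₁pos hPproj hPpos hle1
  -- E₂ is absorbed by 1 - P
  have hQproj : IsIdempotentElem (1 - P) := hPproj.one_sub
  have hQpos : (1 - P).IsPositive := by
    have : (1 : H →L[ℂ] H) - P = M₁ Xᶜ := (hM₁.compl hX).symm
    rw [this]
    exact hM₁.1 Xᶜ hX.compl
  have hle2 : ((1 - P) - M (Xᶜ ×ˢ Y)).IsPositive := by
    have : (1 - P) - M (Xᶜ ×ˢ Y) = M (Xᶜ ×ˢ Yᶜ) := by rw [← hsplit2]; abel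
    rw [this]
    exact hM.1 _ (hX.compl.prod hY.compl)
  obtain ⟨hE₂Q, hQE₂⟩ := absorb_of_le_proj hE₂pos hQproj hQpos hle2
  -- P * E₂ = 0 and E₂ * P = 0
  have hPE₂ : P * M (Xᶜ ×ˢ Y) = 0 := by
    have h := congrArg (fun T => P * T) hQE₂
    rw [← h, ← mul_assoc]
    have : P * (1 - P) = 0 := by
      rw [mul_sub, mul_one, hPproj.eq, sub_self]
    rw [this, zero_mul]
  have hE₂P : M (Xᶜ ×ˢ Y) * P = 0 := by
    have h := congrArg (fun T => T * P) hE₂Q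
    rw [← h, mul_assoc]
    have : (1 - P) * P = 0 := by
      rw [sub_mul, one_mul, hPproj.eq, sub_self]
    rw [this, mul_zero]
  -- conclude
  have hPB : P * B = M (X ×ˢ Y) := by
    rw [← hsplit3, mul_add, hPE₁, hPE₂, add_zero]
  have hBP : B * P = M (X ×ˢ Y) := by
    rw [← hsplit3, add_mul, hE₁P, hE₂P, add_zero]
  exact ⟨(hBP.trans hPB.symm).symm, hPB.symm⟩

end Core

/-- **Joint observable with a sharp marginal** (item (b) of the paper). Let `M₁` and `M₂`
be jointly measurable POVMs on `(Ω, Σ)` and `(Ω', Σ')` with values in `L(H)`, `H`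
separable, and let `M` be a joint observable. If `M₁` or `M₂` is sharp (projection
valued), then `M₁` and `M₂` commute, the joint observable satisfies
`M (X × Y) = M₁ X * M₂ Y`, and it is unique. -/
theorem joint_observable_of_sharp_marginal
    {Ω Ω' : Type*} [MeasurableSpace Ω] [MeasurableSpace Ω']
    {H : Type*} [NormedAddCommGroup H] [InnerProductSpace ℂ H] [CompleteSpace H]
    [TopologicalSpace.SeparableSpace H]
    (M₁ : Set Ω → H →L[ℂ] H) (M₂ : Set Ω' → H →L[ℂ] H)
    (hM₁ : IsPOVM M₁) (hM₂ : IsPOVM M₂)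
    (M : Set (Ω × Ω') → H →L[ℂ] H) (hM : IsPOVM M)
    (hmarg₁ : ∀ X : Set Ω, MeasurableSet X → M (X ×ˢ (Set.univ : Set Ω')) = M₁ X)
    (hmarg₂ : ∀ Y : Set Ω', MeasurableSet Y → M ((Set.univ : Set Ω) ×ˢ Y) = M₂ Y)
    (hsharp : (∀ X : Set Ω, MeasurableSet X → IsIdempotentElem (M₁ X)) ∨
      (∀ Y : Set Ω', MeasurableSet Y → IsIdempotentElem (M₂ Y))) :
    (∀ (X : Set Ω) (Y : Set Ω'), MeasurableSet X → MeasurableSet Y →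
      Commute (M₁ X) (M₂ Y)) ∧
    (∀ (X : Set Ω) (Y : Set Ω'), MeasurableSet X → MeasurableSet Y →
      M (X ×ˢ Y) = M₁ X * M₂ Y) ∧
    (∀ M' : Set (Ω × Ω') → H →L[ℂ] H, IsPOVM M' →
      (∀ X : Set Ω, MeasurableSet X → M' (X ×ˢ (Set.univ : Set Ω')) = M₁ X) →
      (∀ Y : Set Ω', MeasurableSet Y → M' ((Set.univ : Set Ω) ×ˢ Y) = M₂ Y) →
      ∀ Z : Set (Ω × Ω'), MeasurableSet Z → M' Z = M Z) := by
  -- The key: for any joint observable N of the pair, on rectangles N (X ×ˢ Y) = M₁ X * M₂ Y,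
  -- and the marginals commute.
  have main : ∀ N : Set (Ω × Ω') → H →L[ℂ] H, IsPOVM N →
      (∀ X : Set Ω, MeasurableSet X → N (X ×ˢ (Set.univ : Set Ω')) = M₁ X) →
      (∀ Y : Set Ω', MeasurableSet Y → N ((Set.univ : Set Ω) ×ˢ Y) = M₂ Y) →
      ∀ (X : Set Ω) (Y : Set Ω'), MeasurableSet X → MeasurableSet Y →
        Commute (M₁ X) (M₂ Y) ∧ N (X ×ˢ Y) = M₁ X * M₂ Y := by
    intro N hN hm₁ hm₂ X Y hX hY
    rcases hsharp with hs | hs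
    · exact joint_core M₁ M₂ hM₁ hM₂ N hN hm₁ hm₂ hs hX hY
    · -- swap the roles of the two factors
      set Ns : Set (Ω' × Ω) → H →L[ℂ] H := fun Z => N (Prod.swap ⁻¹' Z) with hNs
      have hNsPOVM : IsPOVM Ns := by
        refine ⟨fun Z hZ => hN.1 _ (measurable_swap hZ), ?_, ?_⟩
        · simpa [hNs, Set.preimage_univ] using hN.2.1
        · intro f hf hd x y
          have h := hN.2.2 (fun n => Prod.swap ⁻¹' f n)
            (fun n => measurable_swap (hf n))
            (fun i j hij => (hd hij).preimage _) x y
          rw [← Set.preimage_iUnion] at h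
          exact h
      have hm₁s : ∀ Y' : Set Ω', MeasurableSet Y' →
          Ns (Y' ×ˢ (Set.univ : Set Ω)) = M₂ Y' := by
        intro Y' hY'
        have : Prod.swap ⁻¹' (Y' ×ˢ (Set.univ : Set Ω)) = (Set.univ : Set Ω) ×ˢ Y' := by
          ext z; simp [Set.mem_prod]
        rw [hNs]; simp only; rw [this]; exact hm₂ Y' hY'
      have hm₂s : ∀ X' : Set Ω, MeasurableSet X' →
          Ns ((Set.univ : Set Ω') ×ˢ X') = M₁ X' := by
        intro X' hX'
        have : Prod.swap ⁻¹' ((Set.univ : Set Ω') ×ˢ X') = X' ×ˢ (Set.univ : Set Ω') := by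
          ext z; simp [Set.mem_prod]
        rw [hNs]; simp only; rw [this]; exact hm₁ X' hX'
      obtain ⟨hc, hp⟩ := joint_core M₂ M₁ hM₂ hM₁ Ns hNsPOVM hm₁s hm₂s hs hY hX
      have hswap : Prod.swap ⁻¹' (Y ×ˢ X) = X ×ˢ Y := by
        ext z; simp [Set.mem_prod]
      rw [hNs] at hp; simp only at hp; rw [hswap] at hp
      refine ⟨hc.symm, ?_⟩
      rw [hp, hc.eq]
  obtain ⟨hcomm, hprod⟩ :
      (∀ (X : Set Ω) (Y : Set Ω'), MeasurableSet X → MeasurableSet Y →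
        Commute (M₁ X) (M₂ Y)) ∧
      (∀ (X : Set Ω) (Y : Set Ω'), MeasurableSet X → MeasurableSet Y →
        M (X ×ˢ Y) = M₁ X * M₂ Y) := by
    constructor
    · intro X Y hX hY; exact (main M hM hmarg₁ hmarg₂ X Y hX hY).1
    · intro X Y hX hY; exact (main M hM hmarg₁ hmarg₂ X Y hX hY).2
  refine ⟨hcomm, hprod, ?_⟩
  -- uniqueness via the π-λ theorem
  intro M' hM' hm₁' hm₂'
  have hprod' : ∀ (X : Set Ω) (Y : Set Ω'), MeasurableSet X → MeasurableSet Y →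
      M' (X ×ˢ Y) = M₁ X * M₂ Y :=
    fun X Y hX hY => (main M' hM' hm₁' hm₂' X Y hX hY).2
  refine MeasurableSpace.induction_on_inter (C := fun Z _ => M' Z = M Z)
    generateFrom_prod.symm isPiSystem_prod ?_ ?_ ?_ ?_
  · show M' ∅ = M ∅
    rw [hM'.empty, hM.empty]
  · rintro t ⟨X, hX, Y, hY, rfl⟩
    show M' _ = M _
    rw [hprod' X Y hX hY, hprod X Y hX hY]
  · intro t ht hC
    show M' tᶜ = M tᶜ
    rw [hM'.compl ht, hM.compl ht]
    rw [show M' t = M t from hC]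
  · intro f hd hf hC
    show M' _ = M _
    apply clm_ext_inner
    intro x y
    have h1 := hM'.2.2 f hf hd x y
    have h2 := hM.2.2 f hf hd x y
    have : (fun n => ⟪x, M' (f n) y⟫) = fun n => ⟪x, M (f n) y⟫ := by
      funext n; rw [hC n]
    rw [this] at h1
    exact h1.unique h2
end
end
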